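/- arXiv:1310.5403 — 8 statements merged into one kernel-verified Lean document; each statement's English description precedes it below -/
import Mathlib

section
/- Let α ≥ 2 be an integer and let λ > 1/(2α) be a real number. Then the series Σ_{k∈E} 2^{−2λ μ_α(⌊k/2⌋)} converges and equals A_{α,λ,1} = Σ_{v=1}^{α−1} ∏_{i=1}^{v} 1/(2^{2λi}−1) + (1/(2^{2λα}−2)) ∏_{i=1}^{α−1} 1/(2^{2λi}−1). -/
open scoped BigOperators

attribute [local instance] Classical.propDecidable

noncomputable section

/-- `mu α k` is μ_α(k): with k = 2^{a_1−1} + ⋯ + 2^{a_v−1}, a_1 > ⋯ > a_v > 0, the sum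
a_1 + ⋯ + a_{min(α,v)}; μ_α(0) = 0. -/
def mu (α k : ℕ) : ℕ :=
  (((((List.range (k+1)).filter (fun i => k.testBit i)).reverse).take α).map (· + 1)).sum

/-- The set E of positive integers with even binary sum-of-digits. -/
def Eset : Set ℕ := {k | 1 ≤ k ∧ Even ((Nat.digits 2 k).sum)}

/-- tr_{m'}(k) = κ_0 + κ_1 x + ⋯ + κ_{m'−1} x^{m'−1} ∈ 𝔽₂[x]. -/
def trunc (m' k : ℕ) : Polynomial (ZMod 2) :=
  ∑ i ∈ Finset.range m', Polynomial.monomial i (if k.testBit i then 1 else 0)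

/-- The polynomial n(x) ∈ 𝔽₂[x] associated to n ∈ ℕ via its binary digits. -/
def nPoly (n : ℕ) : Polynomial (ZMod 2) := trunc (n+1) n

/-- C_1 = 1/2, C_τ = 2^{−τ}(5/3)^{τ−2} for τ ≥ 2. -/
def Cconst (τ : ℕ) : ℝ := if τ = 1 then 1/2 else (2:ℝ)^(-(τ:ℝ)) * (5/3:ℝ)^((τ:ℝ)-2)

/-- C'_{α,ν} = Σ_{τ=ν}^{α} C_τ² 2^{−2(τ−ν)}. -/
def Cprime (α ν : ℕ) : ℝ :=
  ∑ τ ∈ Finset.Icc ν α, (Cconst τ)^2 * (2:ℝ)^(-(2:ℝ)*((τ:ℝ)-(ν:ℝ)))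

/-- C̃_{2α} = 2^{−2α+1}(5/3)^{2α−2}. -/
def Ctilde (α : ℕ) : ℝ := (2:ℝ)^(-(2:ℝ)*(α:ℝ)+1) * (5/3:ℝ)^(2*(α:ℝ)-2)

/-- D_α = max_{1≤ν≤α} (C'_{α,ν} + C̃_{2α} 2^{−2(α−ν)}). -/
def Dconst (α : ℕ) : ℝ :=
  sSup {x : ℝ | ∃ ν, 1 ≤ ν ∧ ν ≤ α ∧
    x = Cprime α ν + Ctilde α * (2:ℝ)^(-(2:ℝ)*((α:ℝ)-(ν:ℝ)))}

/-- A_{α,λ,1}. -/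
def A1 (α : ℕ) (lam : ℝ) : ℝ :=
  (∑ v ∈ Finset.Icc 1 (α-1), ∏ i ∈ Finset.Icc 1 v, (1 / ((2:ℝ)^(2*lam*(i:ℝ)) - 1)))
  + (1/((2:ℝ)^(2*lam*(α:ℝ)) - 2)) * ∏ i ∈ Finset.Icc 1 (α-1), 1/((2:ℝ)^(2*lam*(i:ℝ)) - 1)

/-- A_{α,λ,2}. -/
def A2 (α : ℕ) (lam : ℝ) : ℝ :=
  (∑ v ∈ Finset.Icc 1 ((α-1)/2), ∏ i ∈ Finset.Icc 1 (2*v),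
      ((2:ℝ)^(2*lam) / ((2:ℝ)^(2*lam*(i:ℝ)) - 1)))
  + ((2:ℝ)^(2*lam)/((2:ℝ)^(2*lam*(α:ℝ)) - 2)) *
      ∏ i ∈ Finset.Icc 1 (α-1), (2:ℝ)^(2*lam)/((2:ℝ)^(2*lam*(i:ℝ)) - 1)

/-- Membership of a d-dimensional frequency vector k in the dual polynomial lattice
D^⊥(q,p): tr_{m'}(k_1)q_1 + ⋯ + tr_{m'}(k_d)q_d ≡ a (mod p) with deg(a) < m'−m. -/
def inDual (m m' d : ℕ) (q : ℕ → Polynomial (ZMod 2)) (p : Polynomial (ZMod 2))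
    (k : ℕ → ℕ) : Prop :=
  ∃ a : Polynomial (ZMod 2), a.degree < ((m' - m : ℕ) : WithBot ℕ) ∧
    p ∣ ((∑ j ∈ Finset.range d, trunc m' (k j) * q j) - a)

/-- The inner sum Σ_{k_u ∈ E^{|u|}, (k_u,0) ∈ D^⊥(q,p)} ∏_{j∈u} 2^{−2μ_α(⌊k_j/2⌋)}
(in dimension d). -/
def dualSum (m m' α d : ℕ) (q : ℕ → Polynomial (ZMod 2)) (p : Polynomial (ZMod 2))
    (u : Finset ℕ) : ℝ :=
  ∑' k : (↥u → ℕ),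
    if (∀ j, (k j) ∈ Eset) ∧
        inDual m m' d q p (fun j => if h : j ∈ u then k ⟨j, h⟩ else 0)
    then ∏ j, (2:ℝ)^(-(2:ℝ) * (mu α (k j / 2) : ℝ)) else 0

/-- The quality criterion B_{α,γ}(q,p) in dimension d (coordinates indexed 0,…,d−1). -/
def Bcrit (d m m' α : ℕ) (γ : Finset ℕ → ℝ) (q : ℕ → Polynomial (ZMod 2))
    (p : Polynomial (ZMod 2)) : ℝ :=
  ∑ u ∈ (Finset.range d).powerset.filter (· ≠ ∅),
    γ u * Dconst α ^ u.card * dualSum m m' α d q p u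

/-- ξ_i digit of the dyadic rational x = l/2^{m'} (with ξ_i = 0 for i > m'). -/
def xi (m' l i : ℕ) : ℕ := if 1 ≤ i ∧ i ≤ m' ∧ l.testBit (m' - i) then 1 else 0

/-- Walsh function value wal_k(l/2^{m'}) = (−1)^{ξ_1κ_0 + ξ_2κ_1 + ⋯}. -/
def wal (m' l k : ℕ) : ℝ :=
  (-1:ℝ) ^ (∑ i ∈ Finset.range (k+1), (if k.testBit i then xi m' l (i+1) else 0))

/-- ω_α(l/2^{m'}) = Σ_{k∈E} 2^{−2μ_α(⌊k/2⌋)} wal_k(l/2^{m'}). -/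
def omega (α m' l : ℕ) : ℝ :=
  ∑' k : ↥Eset, (2:ℝ)^(-(2:ℝ) * (mu α ((k:ℕ)/2) : ℝ)) * wal m' l (k:ℕ)

/-- The numerator L ∈ {0,…,2^{m'}−1} such that v_{m'}(f/p) = L/2^{m'}: the l-th binary
digit t_l of v_{m'}(f/p) is the constant coefficient of (f·x^l) div p. -/
def vnum (m' : ℕ) (f p : Polynomial (ZMod 2)) : ℕ :=
  ∑ l ∈ Finset.Icc 1 m', (if ((f * Polynomial.X ^ l) / p).coeff 0 = 1 then 2^(m' - l) else 0)

/-- The polynomial in G_{m'} with coefficient vector c. -/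
def polyOf {n : ℕ} (c : Fin n → ZMod 2) : Polynomial (ZMod 2) :=
  ∑ i : Fin n, Polynomial.monomial (i : ℕ) (c i)

/-- Strictly decreasing v-tuples of positive integers a_1 > ⋯ > a_v > 0. -/
def decTuples (v : ℕ) : Type := {a : Fin v → ℕ // StrictAnti a ∧ ∀ i, 0 < a i}

end

namespace Stmt2Aux

/-! ### Properties of `mu` -/

lemma filter_range_add (p : ℕ → Bool) (c t : ℕ) (h : ∀ i, c ≤ i → p i = false) :
    (List.range (c+t)).filter p = (List.range c).filter p := by
  induction t with
  | zero => rfl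
  | succ t ih =>
      rw [← Nat.add_assoc, List.range_succ, List.filter_append, ih]
      simp [h (c+t) (Nat.le_add_right _ _)]

lemma filter_range_eq (k : ℕ) {N M : ℕ} (hN : k < 2^N) (hM : k < 2^M) :
    (List.range N).filter (fun i => k.testBit i)
      = (List.range M).filter (fun i => k.testBit i) := by
  have key : ∀ {A B : ℕ}, k < 2^A → A ≤ B →
      (List.range B).filter (fun i => k.testBit i)
        = (List.range A).filter (fun i => k.testBit i) := by
    intro A B hA hAB
    obtain ⟨t, rfl⟩ := Nat.exists_eq_add_of_le hAB
    exact filter_range_add _ A t (fun i hi => Nat.testBit_eq_false_of_lt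
      (lt_of_lt_of_le hA (Nat.pow_le_pow_right (by norm_num) hi)))
  rcases le_total N M with h | h
  · rw [key hN h]
  · rw [key hM h]

lemma mu_eq (γ k N : ℕ) (h : k < 2^N) :
    mu γ k = (((((List.range N).filter (fun i => k.testBit i)).reverse).take γ).map
      (· + 1)).sum := by
  have hk : k < 2^(k+1) :=
    lt_of_lt_of_le ((Nat.lt_two_pow_self (n := k))) (Nat.pow_le_pow_right (by norm_num) (Nat.le_succ k))
  rw [mu, filter_range_eq k hk h]

lemma mu_zero_right (γ : ℕ) : mu γ 0 = 0 := by
  simp [mu]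

lemma mu_split (γ a m : ℕ) (hm : m < 2^a) :
    mu (γ+1) (2^a + m) = (a+1) + mu γ m := by
  have hpow : (2:ℕ)^(a+1) = 2^a + 2^a := by rw [pow_succ]; omega
  have h1 : 2^a + m < 2^(a+1) := by omega
  rw [mu_eq (γ+1) (2^a+m) (a+1) h1, mu_eq γ m a hm]
  have hfilter : (List.range (a+1)).filter (fun i => (2^a+m).testBit i)
      = ((List.range a).filter (fun i => m.testBit i)) ++ [a] := by
    rw [List.range_succ, List.filter_append]
    congr 1
    · apply List.filter_congr
      intro i hi
      rw [List.mem_range] at hi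
      rw [Nat.testBit_two_pow_add_gt hi]
    · simp [Nat.testBit_two_pow_add_eq, Nat.testBit_eq_false_of_lt hm]
  rw [hfilter, List.reverse_append]
  simp

/-! ### The finite partial sums T and the closed forms -/

noncomputable def Tay (x : ℝ) (γ a : ℕ) : ℝ := ∑ m ∈ Finset.range (2^a), x ^ (mu γ m)

noncomputable def Pv (x y : ℝ) (v : ℕ) : ℝ := ∏ j ∈ Finset.range v, (x^j*y)/(1-x^j*y)

noncomputable def Fv (x y : ℝ) (γ : ℕ) : ℝ :=
  (∑ v ∈ Finset.range γ, Pv x y (v+1)) + Pv x y γ * ((x^γ*y)/(1-2*(x^γ*y)))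

lemma mu_zero_left (k : ℕ) : mu 0 k = 0 := by simp [mu]

lemma Tay_zero (x : ℝ) (a : ℕ) : Tay x 0 a = (2^a : ℕ) := by
  simp [Tay, mu_zero_left]

lemma Tay_succ (x : ℝ) (γ a : ℕ) :
    Tay x (γ+1) (a+1) = Tay x (γ+1) a + x^(a+1) * Tay x γ a := by
  unfold Tay
  have hpow : (2:ℕ)^(a+1) = 2^a + 2^a := by rw [pow_succ]; omega
  rw [hpow, Finset.sum_range_add, Finset.mul_sum]
  congr 1
  apply Finset.sum_congr rfl
  intro m hm
  rw [Finset.mem_range] at hm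
  rw [mu_split γ a m hm, pow_add]

lemma Tay_unroll (x : ℝ) (γ a : ℕ) :
    Tay x (γ+1) a = 1 + ∑ b ∈ Finset.range a, x^(b+1) * Tay x γ b := by
  induction a with
  | zero => simp [Tay, mu_zero_right]
  | succ a ih => rw [Tay_succ, ih, Finset.sum_range_succ]; ring

lemma Tay_nonneg (x : ℝ) (hx : 0 ≤ x) (γ a : ℕ) : 0 ≤ Tay x γ a :=
  Finset.sum_nonneg fun _ _ => pow_nonneg hx _

/-! ### Algebraic identities for the closed forms -/

lemma Pv_succ (x y : ℝ) (v : ℕ) : Pv x y (v+1) = Pv x (x*y) v * (y/(1-y)) := by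
  unfold Pv
  rw [Finset.prod_range_succ']
  congr 1
  · apply Finset.prod_congr rfl
    intro j _
    rw [pow_succ]
    ring_nf
  · norm_num

lemma Fv_succ (x y : ℝ) (γ : ℕ) :
    Fv x y (γ+1) = y/(1-y) * (1 + Fv x (x*y) γ) := by
  unfold Fv
  rw [Finset.sum_range_succ']
  rw [Finset.sum_congr rfl (fun v _ => Pv_succ x y (v+1)), ← Finset.sum_mul]
  rw [Pv_succ x y γ, Pv_succ x y 0]
  have h1 : x^(γ+1)*y = x^γ*(x*y) := by ring
  rw [h1]
  have h3 : Pv x (x*y) 0 = 1 := by simp [Pv]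
  rw [h3]
  ring

/-! ### The key HasSum computation -/

lemma sigma_fin_ext {n : ℕ → ℕ} {a a' b b' : ℕ} (h : a = a') (hb : b < n a) (hb' : b' < n a')
    (hbb : b = b') : (⟨a, ⟨b, hb⟩⟩ : Σ i, Fin (n i)) = ⟨a', ⟨b', hb'⟩⟩ := by
  subst h; subst hbb; rfl

lemma key (x : ℝ) (hx0 : 0 < x) (hx1 : x < 1) :
    ∀ γ : ℕ, ∀ y : ℝ, 0 < y → y < 1 → 2 * (x^γ * y) < 1 →
    HasSum (fun a : ℕ => y^(a+1) * Tay x γ a) (Fv x y γ) := by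
  intro γ
  induction γ with
  | zero =>
      intro y hy0 hy1 h2
      have h2' : 2*y < 1 := by simpa using h2
      have hg : HasSum (fun a : ℕ => (2*y)^a) (1 - 2*y)⁻¹ :=
        hasSum_geometric_of_lt_one (by positivity) h2'
      have hg2 := hg.mul_left y
      have hfun : (fun a : ℕ => y * (2*y)^a) = fun a : ℕ => y^(a+1) * Tay x 0 a := by
        funext a
        rw [Tay_zero]
        push_cast
        rw [mul_pow]
        ring
      rw [hfun] at hg2
      have hFv : Fv x y 0 = y * (1-2*y)⁻¹ := by
        simp [Fv, Pv, div_eq_mul_inv]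
      rw [hFv]
      exact hg2
  | succ γ ih =>
      intro y hy0 hy1 h2
      have hy'0 : 0 < x*y := by positivity
      have hy'1 : x*y < 1 := by nlinarith
      have h2' : 2 * (x^γ * (x*y)) < 1 := by
        have : x^γ * (x*y) = x^(γ+1)*y := by ring
        rw [this]; exact h2
      have IH := ih (x*y) hy'0 hy'1 h2'
      have hyg : HasSum (fun t : ℕ => y^t) (1-y)⁻¹ :=
        hasSum_geometric_of_lt_one hy0.le hy1
      -- the double-indexed family
      set f : ℕ × ℕ → ℝ := fun p => y^(p.1 + p.2 + 2) * (x^(p.1+1) * Tay x γ p.1) with hf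
      have hfnn : ∀ p, 0 ≤ f p := by
        intro p
        apply mul_nonneg (by positivity)
        exact mul_nonneg (by positivity) (Tay_nonneg x hx0.le _ _)
      have hfib : ∀ b, HasSum (fun t => f (b, t))
          ((1-y)⁻¹ * (y^(b+2) * (x^(b+1) * Tay x γ b))) := by
        intro b
        have := hyg.mul_left (y^(b+2) * (x^(b+1) * Tay x γ b))
        have hfun : (fun t : ℕ => y^(b+2) * (x^(b+1) * Tay x γ b) * y^t)
            = fun t => f (b, t) := by
          funext t
          simp only [hf]
          rw [show b + t + 2 = (b+2) + t by omega, pow_add]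
          ring
        rw [hfun] at this
        rw [mul_comm ((1-y)⁻¹)]
        exact this
      have hsum2 : HasSum (fun b : ℕ => (1-y)⁻¹ * (y^(b+2) * (x^(b+1) * Tay x γ b)))
          ((y*(1-y)⁻¹) * Fv x (x*y) γ) := by
        have := IH.mul_left (y * (1-y)⁻¹)
        have hfun : (fun b : ℕ => y * (1-y)⁻¹ * ((x*y)^(b+1) * Tay x γ b))
            = fun b : ℕ => (1-y)⁻¹ * (y^(b+2) * (x^(b+1) * Tay x γ b)) := by
          funext b
          rw [mul_pow]
          ring
        rw [hfun] at this
        exact this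
      have hfsummable : Summable f := by
        rw [summable_prod_of_nonneg hfnn]
        refine ⟨fun b => (hfib b).summable, ?_⟩
        apply Summable.congr hsum2.summable
        intro b
        exact ((hfib b).tsum_eq).symm
      have hftotal : HasSum f ((y*(1-y)⁻¹) * Fv x (x*y) γ) := by
        have h1 := hfsummable.hasSum
        have h2'' := h1.prod_fiberwise hfib
        have := h2''.unique hsum2
        rwa [this] at h1
      -- transport to the sigma type
      set φ : ℕ × ℕ → (Σ a : ℕ, Fin a) := fun p => ⟨p.1 + p.2 + 1, ⟨p.1, by omega⟩⟩ with hφ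
      have hbij : Function.Bijective φ := by
        constructor
        · intro p q hpq
          have h1 : p.1 + p.2 + 1 = q.1 + q.2 + 1 :=
            congrArg (fun s : (Σ a : ℕ, Fin a) => s.1) hpq
          have h2'' : p.1 = q.1 :=
            congrArg (fun s : (Σ a : ℕ, Fin a) => (s.2 : ℕ)) hpq
          have h3 : p.2 = q.2 := by omega
          exact Prod.ext h2'' h3
        · rintro ⟨a, ⟨b, hb⟩⟩
          exact ⟨(b, a - b - 1), sigma_fin_ext (n := fun i => i)
            (show b + (a - b - 1) + 1 = a by omega)
            (show b < b + (a - b - 1) + 1 by omega) hb rfl⟩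
      set e := Equiv.ofBijective φ hbij with he
      set g : (Σ a : ℕ, Fin a) → ℝ :=
        fun s => y^(s.1+1) * (x^((s.2:ℕ)+1) * Tay x γ (s.2:ℕ)) with hg
      have hge : (g ∘ e) = f := by
        funext p
        show y^((p.1 + p.2 + 1)+1) * (x^(p.1+1) * Tay x γ p.1) = _
        simp only [hf]
      have hgsum : HasSum g ((y*(1-y)⁻¹) * Fv x (x*y) γ) := by
        rw [← Equiv.hasSum_iff e, hge]
        exact hftotal
      have hsigma : HasSum (fun a : ℕ => ∑ b : Fin a, g ⟨a, b⟩)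
          ((y*(1-y)⁻¹) * Fv x (x*y) γ) :=
        hgsum.sigma (fun a => hasSum_fintype _)
      have hfun2 : (fun a : ℕ => ∑ b : Fin a, g ⟨a, b⟩)
          = fun a : ℕ => y^(a+1) * ∑ b ∈ Finset.range a, x^(b+1) * Tay x γ b := by
        funext a
        rw [Finset.mul_sum]
        rw [← Fin.sum_univ_eq_sum_range (fun b => y^(a+1) * (x^(b+1) * Tay x γ b)) a]
      rw [hfun2] at hsigma
      have hga : HasSum (fun a : ℕ => y^(a+1)) (y * (1-y)⁻¹) := by
        have := hyg.mul_left y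
        have hfun : (fun t : ℕ => y * y^t) = fun a : ℕ => y^(a+1) := by
          funext t; rw [pow_succ]; ring
        rwa [hfun] at this
      have htot := hga.add hsigma
      have hfun3 : (fun a : ℕ => y^(a+1) + y^(a+1) * ∑ b ∈ Finset.range a,
          x^(b+1) * Tay x γ b) = fun a : ℕ => y^(a+1) * Tay x (γ+1) a := by
        funext a
        rw [Tay_unroll]
        ring
      rw [hfun3] at htot
      have hval : y * (1-y)⁻¹ + y * (1-y)⁻¹ * Fv x (x*y) γ = Fv x y (γ+1) := by
        rw [Fv_succ, div_eq_mul_inv]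
        ring
      rwa [hval] at htot

/-! ### Digit sums -/

lemma dsum (k : ℕ) (hk : 0 < k) :
    (Nat.digits 2 k).sum = k % 2 + (Nat.digits 2 (k/2)).sum := by
  rw [Nat.digits_def' (by norm_num : 1 < 2) hk]
  simp

/-! ### Final assembly -/

end Stmt2Aux

open Stmt2Aux

/-- Σ_{k∈E} 2^{−2λμ_α(⌊k/2⌋)} converges to A_{α,λ,1}. -/
theorem stmt2 (α : ℕ) (hα : 2 ≤ α) (lam : ℝ) (hlam : 1/(2*(α:ℝ)) < lam) :
    HasSum (fun k : ↥Eset => (2:ℝ) ^ (-(2*lam*(mu α ((k:ℕ)/2) : ℝ)))) (A1 α lam) := by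
  have hα2 : (2:ℝ) ≤ (α:ℝ) := by exact_mod_cast hα
  have hαpos : (0:ℝ) < (α:ℝ) := by linarith
  have hlam0 : 0 < lam := lt_trans (by positivity) hlam
  set x : ℝ := (2:ℝ)^(-(2*lam)) with hx
  have hx0 : 0 < x := Real.rpow_pos_of_pos (by norm_num) _
  have hx1 : x < 1 := by
    apply Real.rpow_lt_one_of_one_lt_of_neg (by norm_num)
    linarith
  -- x ^ n = 2 ^ (-(2 lam n))
  have hxpow : ∀ n : ℕ, x ^ n = (2:ℝ)^(-(2*lam*(n:ℝ))) := by
    intro n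
    rw [hx, ← Real.rpow_natCast ((2:ℝ)^(-(2*lam))) n, ← Real.rpow_mul (by norm_num)]
    ring_nf
  have hxαlt : 2 * x^α < 1 := by
    rw [hxpow α]
    have h1 : (2:ℝ) * (2:ℝ)^(-(2*lam*(α:ℝ))) = (2:ℝ)^(1 + -(2*lam*(α:ℝ))) := by
      rw [Real.rpow_add (by norm_num), Real.rpow_one]
    rw [h1]
    apply Real.rpow_lt_one_of_one_lt_of_neg (by norm_num)
    have : 1 < 2*lam*(α:ℝ) := by
      rw [div_lt_iff₀ (by positivity)] at hlam
      nlinarith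
    linarith
  have hkey : HasSum (fun a : ℕ => x^(a+1) * Tay x (α-1) a) (Fv x x (α-1)) := by
    apply key x hx0 hx1 (α-1) x hx0 hx1
    have h1 : x^(α-1) * x = x^α := by
      rw [← pow_succ]
      congr 1
      omega
    rw [h1]
    exact hxαlt
  -- the sigma family
  set f1 : (Σ a : ℕ, Fin (2^a)) → ℝ := fun s => x^(s.1 + 1 + mu (α-1) (s.2:ℕ)) with hf1
  have hfib : ∀ a : ℕ, HasSum (fun m : Fin (2^a) => f1 ⟨a, m⟩)
      (x^(a+1) * Tay x (α-1) a) := by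
    intro a
    have h0 := hasSum_fintype (fun m : Fin (2^a) => f1 ⟨a, m⟩)
    have : ∑ m : Fin (2^a), f1 ⟨a, m⟩ = x^(a+1) * Tay x (α-1) a := by
      rw [Tay, Finset.mul_sum,
        ← Fin.sum_univ_eq_sum_range (fun m => x^(a+1) * x^(mu (α-1) m)) (2^a)]
      apply Finset.sum_congr rfl
      intro m _
      simp only [hf1]
      rw [← pow_add]
    rwa [this] at h0
  have hf1nn : ∀ s, 0 ≤ f1 s := fun s => by positivity
  have hf1summable : Summable f1 := by
    rw [summable_sigma_of_nonneg hf1nn]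
    refine ⟨fun a => (hfib a).summable, ?_⟩
    apply Summable.congr hkey.summable
    intro a
    exact ((hfib a).tsum_eq).symm
  have hf1sum : HasSum f1 (Fv x x (α-1)) :=
    HasSum.sigma_of_hasSum hkey hfib hf1summable
  -- the bijection onto Eset
  set φ : (Σ a : ℕ, Fin (2^a)) → ↥Eset := fun s =>
    ⟨2*(2^s.1 + (s.2:ℕ)) + (Nat.digits 2 (2^s.1 + (s.2:ℕ))).sum % 2, by
      have hpos : 0 < 2^s.1 := by positivity
      set n := 2^s.1 + (s.2:ℕ) with hn
      set b := (Nat.digits 2 n).sum % 2 with hb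
      have hb1 : b ≤ 1 := by omega
      constructor
      · omega
      · have hk : 0 < 2*n + b := by omega
        rw [dsum _ hk]
        have h1 : (2*n+b) % 2 = b := by omega
        have h2 : (2*n+b) / 2 = n := by omega
        rw [h1, h2, Nat.even_iff]
        omega⟩ with hφ
  have hφval : ∀ s : (Σ a : ℕ, Fin (2^a)),
      (φ s : ℕ) = 2*(2^s.1 + (s.2:ℕ)) + (Nat.digits 2 (2^s.1 + (s.2:ℕ))).sum % 2 :=
    fun s => rfl
  have hφdiv : ∀ s : (Σ a : ℕ, Fin (2^a)), ((φ s : ℕ))/2 = 2^s.1 + (s.2:ℕ) := by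
    intro s
    rw [hφval s]
    omega
  have hbij : Function.Bijective φ := by
    constructor
    · rintro ⟨a, ⟨m, hm⟩⟩ ⟨a', ⟨m', hm'⟩⟩ hpq
      have hval : (φ ⟨a, ⟨m, hm⟩⟩ : ℕ) = (φ ⟨a', ⟨m', hm'⟩⟩ : ℕ) := by rw [hpq]
      have hdiv : 2^a + m = 2^a' + m' := by
        rw [← hφdiv ⟨a, ⟨m, hm⟩⟩, ← hφdiv ⟨a', ⟨m', hm'⟩⟩, hval]
      have haa : a = a' := by
        by_contra hne
        rcases Nat.lt_or_ge a a' with h | h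
        · have h1 : (2:ℕ)^(a+1) ≤ 2^a' := Nat.pow_le_pow_right (by norm_num) h
          have h2 : (2:ℕ)^(a+1) = 2^a + 2^a := by rw [pow_succ]; omega
          omega
        · have h : a' < a := by omega
          have h1 : (2:ℕ)^(a'+1) ≤ 2^a := Nat.pow_le_pow_right (by norm_num) h
          have h2 : (2:ℕ)^(a'+1) = 2^a' + 2^a' := by rw [pow_succ]; omega
          omega
      subst haa
      exact sigma_fin_ext rfl hm hm' (by omega)
    · rintro ⟨k, hk1, hk2⟩
      -- k ≥ 2
      have hkne1 : k ≠ 1 := by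
        intro h
        subst h
        rw [Nat.digits_def' (by norm_num : 1 < 2) (by norm_num : 0 < 1)] at hk2
        norm_num at hk2
      have hk2' : 2 ≤ k := by omega
      set n := k/2 with hn
      have hn1 : 1 ≤ n := by omega
      set a := n.size - 1 with ha
      have hsizepos : 0 < n.size := Nat.size_pos.mpr hn1
      have h2a : 2^a ≤ n := by
        apply Nat.lt_size.mp
        omega
      have h2b : n < 2^(a+1) := by
        have : a + 1 = n.size := by omega
        rw [this]
        exact Nat.lt_size_self n
      have hpow2 : (2:ℕ)^(a+1) = 2^a + 2^a := by rw [pow_succ]; omega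
      have hm : n - 2^a < 2^a := by omega
      refine ⟨⟨a, ⟨n - 2^a, hm⟩⟩, ?_⟩
      apply Subtype.ext
      rw [hφval]
      simp only
      have hn2 : 2^a + (n - 2^a) = n := by omega
      rw [hn2]
      -- k % 2 = δ(n) % 2
      have hdsum := dsum k (by omega)
      rw [hdsum, Nat.even_iff] at hk2
      rw [← hn] at hk2
      omega
  set e := Equiv.ofBijective φ hbij with he
  rw [← Equiv.hasSum_iff e]
  have hcomp : ((fun k : ↥Eset => (2:ℝ) ^ (-(2*lam*(mu α ((k:ℕ)/2) : ℝ)))) ∘ e) = f1 := by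
    funext s
    obtain ⟨a, m⟩ := s
    simp only [Function.comp_apply, he, Equiv.ofBijective_apply]
    rw [hφdiv ⟨a, m⟩]
    simp only
    have hmu : mu α (2^a + (m:ℕ)) = (a+1) + mu (α-1) (m:ℕ) := by
      rw [show α = (α-1)+1 by omega]
      rw [show (α-1)+1-1 = α-1 by omega]
      exact mu_split (α-1) a (m:ℕ) m.isLt
    rw [hmu, ← hxpow]
  rw [hcomp]
  -- finally, identify the value
  have hA1 : Fv x x (α-1) = A1 α lam := by
    -- interpreting the powers of x
    have hterm : ∀ i : ℕ, 1 ≤ i → x^i/(1-x^i) = 1/((2:ℝ)^(2*lam*(i:ℝ)) - 1) := by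
      intro i hi
      have hc1 : (1:ℝ) < (2:ℝ)^(2*lam*(i:ℝ)) := by
        apply Real.one_lt_rpow_iff_of_pos (by norm_num) |>.mpr
        left
        constructor
        · norm_num
        · have : (1:ℝ) ≤ (i:ℝ) := by exact_mod_cast hi
          positivity
      have hxi : x^i = ((2:ℝ)^(2*lam*(i:ℝ)))⁻¹ := by
        rw [hxpow i, ← Real.rpow_neg (by norm_num)]
      rw [hxi]
      have hc0 : (0:ℝ) < (2:ℝ)^(2*lam*(i:ℝ)) := by positivity
      rw [div_eq_div_iff]
      · field_simp
      · have : ((2:ℝ)^(2*lam*(i:ℝ)))⁻¹ < 1 := by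
          rw [inv_lt_one_iff₀]
          right
          exact hc1
        linarith
      · linarith
    have hPv : ∀ v : ℕ, Pv x x v = ∏ i ∈ Finset.Icc 1 v, 1/((2:ℝ)^(2*lam*(i:ℝ)) - 1) := by
      intro v
      rw [Pv, ← Finset.Ico_add_one_right_eq_Icc, Finset.prod_Ico_eq_prod_range]
      apply Finset.prod_congr (by norm_num)
      intro j _
      have h1 : x^j * x = x^(j+1) := by rw [pow_succ]
      rw [h1, hterm (j+1) (by omega)]
      congr 3
      push_cast
      ring
    -- tail
    have htail : x^(α-1)*x = x^α := by
      rw [← pow_succ]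
      congr 1
      omega
    have htail2 : x^α/(1-2*x^α) = 1/((2:ℝ)^(2*lam*(α:ℝ)) - 2) := by
      have hxα : x^α = ((2:ℝ)^(2*lam*(α:ℝ)))⁻¹ := by
        rw [hxpow α, ← Real.rpow_neg (by norm_num)]
      have hc0 : (0:ℝ) < (2:ℝ)^(2*lam*(α:ℝ)) := by positivity
      have hc2 : (2:ℝ) < (2:ℝ)^(2*lam*(α:ℝ)) := by
        have h1 : (1:ℝ) < 2*lam*(α:ℝ) := by
          rw [div_lt_iff₀ (by positivity)] at hlam
          nlinarith
        have h2 := Real.rpow_lt_rpow_of_exponent_lt (x := (2:ℝ)) (by norm_num) h1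
        rwa [Real.rpow_one] at h2
      rw [hxα]
      rw [div_eq_div_iff]
      · field_simp
      · have h1 : 2 * ((2:ℝ)^(2*lam*(α:ℝ)))⁻¹ < 1 := by
          rw [mul_inv_lt_iff₀ hc0]
          linarith
        linarith
      · linarith
    rw [Fv, A1]
    rw [hPv (α-1)]
    have hsum : ∑ v ∈ Finset.range (α-1), Pv x x (v+1)
        = ∑ v ∈ Finset.Icc 1 (α-1), ∏ i ∈ Finset.Icc 1 v, 1/((2:ℝ)^(2*lam*(i:ℝ)) - 1) := by
      rw [← Finset.Ico_add_one_right_eq_Icc, Finset.sum_Ico_eq_sum_range]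
      apply Finset.sum_congr (by norm_num)
      intro v _
      rw [hPv (v+1), show (1:ℕ)+v = v+1 by omega]
    rw [hsum, htail, htail2]
    ring
  rwa [hA1] at hf1sum
end

section
/- Let m ≤ m' be positive integers, let p ∈ 𝔽₂[x] be an irreducible polynomial with deg(p) = m', let d ≥ 1, and let k_1,…,k_d be positive integers. Let N be the number of vectors (q_1,…,q_d) ∈ G_{m'}^d such that tr_{m'}(k_1)q_1 + ⋯ + tr_{m'}(k_d)q_d ≡ a (mod p) for some a ∈ 𝔽₂[x] with deg(a) < m'−m. If p divides tr_{m'}(k_j) for every j = 1,…,d, then N = 2^{m'd}; if p does not divide tr_{m'}(k_j) for at least one j, then N = 2^{m'd − m}. -/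
open scoped BigOperators

attribute [local instance] Classical.propDecidable

section stmt5aux
open Polynomial

lemma coeff_polyOf {n : ℕ} (c : Fin n → ZMod 2) (j : ℕ) :
    (polyOf c).coeff j = if h : j < n then c ⟨j, h⟩ else 0 := by
  rw [polyOf, Polynomial.finset_sum_coeff]
  simp only [Polynomial.coeff_monomial]
  split
  · next h =>
    rw [Finset.sum_eq_single (⟨j, h⟩ : Fin n)]
    · simp
    · intro b _ hb
      rw [if_neg]
      intro hbj
      exact hb (Fin.ext hbj)
    · simp
  · next h =>
    apply Finset.sum_eq_zero
    intro i _
    rw [if_neg]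
    intro hij
    exact h (hij ▸ i.isLt)

lemma degree_polyOf_lt {n : ℕ} (c : Fin n → ZMod 2) : (polyOf c).degree < (n : WithBot ℕ) := by
  rw [Polynomial.degree_lt_iff_coeff_zero]
  intro j hj
  rw [coeff_polyOf, dif_neg]
  omega

lemma polyOf_inj {n : ℕ} {c₁ c₂ : Fin n → ZMod 2} (h : polyOf c₁ = polyOf c₂) : c₁ = c₂ := by
  funext i
  have := congrArg (fun f => Polynomial.coeff f (i : ℕ)) h
  simpa [coeff_polyOf, i.isLt] using this

lemma psi_inj {p tr : Polynomial (ZMod 2)} (hpr : Prime p) (hmon : p.Monic)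
    {m' : ℕ} (hpdeg : p.degree = (m' : WithBot ℕ)) (htr : ¬ p ∣ tr) (g : Polynomial (ZMod 2))
    (x₁ x₂ : Fin m' → ZMod 2)
    (h : (tr * polyOf x₁ + g) %ₘ p = (tr * polyOf x₂ + g) %ₘ p) : x₁ = x₂ := by
  set A := tr * polyOf x₁ + g with hA
  set B := tr * polyOf x₂ + g with hB
  have hA' := Polynomial.modByMonic_add_div A p
  have hB' := Polynomial.modByMonic_add_div B p
  have hdvd : p ∣ A - B := ⟨A /ₘ p - B /ₘ p, by rw [mul_sub]; linear_combination -hA' + hB' + h⟩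
  have hAB : A - B = tr * (polyOf x₁ - polyOf x₂) := by rw [hA, hB]; ring
  rw [hAB] at hdvd
  have hdvd2 := (hpr.dvd_mul.mp hdvd).resolve_left htr
  have hz : polyOf x₁ - polyOf x₂ = 0 :=
    Polynomial.eq_zero_of_dvd_of_degree_lt hdvd2
      (lt_of_le_of_lt (Polynomial.degree_sub_le _ _)
        (by rw [hpdeg]; exact max_lt (degree_polyOf_lt _) (degree_polyOf_lt _)))
  exact polyOf_inj (sub_eq_zero.mp hz)

lemma psi_surj {p tr : Polynomial (ZMod 2)} (hpr : Prime p) (hmon : p.Monic)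
    {m' : ℕ} (hpdeg : p.degree = (m' : WithBot ℕ)) (htr : ¬ p ∣ tr) (g : Polynomial (ZMod 2))
    (r : Polynomial (ZMod 2)) (hr : r.degree < (m' : WithBot ℕ)) :
    ∃ x : Fin m' → ZMod 2, (tr * polyOf x + g) %ₘ p = r := by
  haveI : Fintype ↥(Polynomial.degreeLT (ZMod 2) m') :=
    Fintype.ofEquiv _ (Polynomial.degreeLTEquiv (ZMod 2) m').toEquiv.symm
  set Ψ : (Fin m' → ZMod 2) → ↥(Polynomial.degreeLT (ZMod 2) m') :=
    fun x => ⟨(tr * polyOf x + g) %ₘ p,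
      Polynomial.mem_degreeLT.2 (hpdeg ▸ Polynomial.degree_modByMonic_lt _ hmon)⟩ with hΨ
  have hinj : Function.Injective Ψ := by
    intro a b hab
    exact psi_inj hpr hmon hpdeg htr g a b (congrArg Subtype.val hab)
  have hcard : Fintype.card (Fin m' → ZMod 2) = Fintype.card ↥(Polynomial.degreeLT (ZMod 2) m') :=
    (Fintype.card_congr (Polynomial.degreeLTEquiv (ZMod 2) m').toEquiv).symm
  have hbij := (Fintype.bijective_iff_injective_and_card Ψ).2 ⟨hinj, hcard⟩
  obtain ⟨x, hx⟩ := hbij.2 ⟨r, Polynomial.mem_degreeLT.2 hr⟩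
  exact ⟨x, congrArg Subtype.val hx⟩

lemma cond_iff {p : Polynomial (ZMod 2)} (hmon : p.Monic) {m' s : ℕ} (hs : s ≤ m')
    (hpdeg : p.degree = (m' : WithBot ℕ)) (f : Polynomial (ZMod 2)) :
    (∃ a : Polynomial (ZMod 2), a.degree < (s : WithBot ℕ) ∧ p ∣ f - a) ↔
      (f %ₘ p).degree < (s : WithBot ℕ) := by
  constructor
  · rintro ⟨a, ha, q, hq⟩
    have hf : f = a + p * q := by linear_combination hq
    have h0 : (p * q) %ₘ p = 0 :=
      (Polynomial.modByMonic_eq_zero_iff_dvd hmon).2 (dvd_mul_right p q)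
    have hself : a %ₘ p = a :=
      (Polynomial.modByMonic_eq_self_iff hmon).2
        (ha.trans_le (by rw [hpdeg]; exact_mod_cast hs))
    have : f %ₘ p = a := by
      rw [hf, Polynomial.add_modByMonic, h0, hself, add_zero]
    rw [this]; exact ha
  · intro h
    exact ⟨f %ₘ p, h, f /ₘ p,
      by linear_combination (Polynomial.modByMonic_add_div f p).symm⟩

end stmt5aux

/-- the number of generating vectors (q_1,…,q_d) ∈ G_{m'}^d (parametrized by
coefficient vectors) satisfying the dual congruence. -/
theorem stmt5 (m m' d : ℕ) (hm : 0 < m) (hmm : m ≤ m') (hd : 1 ≤ d)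
    (p : Polynomial (ZMod 2)) (hp : Irreducible p) (hdeg : p.natDegree = m')
    (k : Fin d → ℕ) (hk : ∀ j, 1 ≤ k j) :
    ((∀ j, p ∣ trunc m' (k j)) →
      (Finset.univ.filter (fun c : Fin d → Fin m' → ZMod 2 =>
        ∃ a : Polynomial (ZMod 2), a.degree < ((m' - m : ℕ) : WithBot ℕ) ∧
          p ∣ ((∑ j, trunc m' (k j) * polyOf (c j)) - a))).card = 2^(m'*d)) ∧
    ((∃ j, ¬ p ∣ trunc m' (k j)) →
      (Finset.univ.filter (fun c : Fin d → Fin m' → ZMod 2 =>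
        ∃ a : Polynomial (ZMod 2), a.degree < ((m' - m : ℕ) : WithBot ℕ) ∧
          p ∣ ((∑ j, trunc m' (k j) * polyOf (c j)) - a))).card = 2^(m'*d - m)) := by
  classical
  have hp0 : p ≠ 0 := hp.ne_zero
  have hmon : p.Monic := by
    have hlc : p.leadingCoeff ≠ 0 := Polynomial.leadingCoeff_ne_zero.mpr hp0
    have h1 : ∀ a : ZMod 2, a ≠ 0 → a = 1 := by decide
    exact h1 _ hlc
  have hpdeg : p.degree = (m' : WithBot ℕ) := by
    rw [Polynomial.degree_eq_natDegree hp0, hdeg]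
  have hpr : Prime p := hp.prime
  have hsle : m' - m ≤ m' := Nat.sub_le _ _
  have hsplit : ∀ c : Fin d → Fin m' → ZMod 2, ∀ j₀ : Fin d,
      (∑ j, trunc m' (k j) * polyOf (c j)) =
        trunc m' (k j₀) * polyOf (c j₀) +
          ∑ j ∈ Finset.univ.erase j₀, trunc m' (k j) * polyOf (c j) :=
    fun c j₀ => (Finset.add_sum_erase _ _ (Finset.mem_univ j₀)).symm
  constructor
  · intro hall
    rw [Finset.filter_true_of_mem, Finset.card_univ]
    · rw [Fintype.card_fun, Fintype.card_fun, Fintype.card_fin, Fintype.card_fin,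
        ZMod.card, pow_mul]
    · intro c _
      refine ⟨0, ?_, ?_⟩
      · rw [Polynomial.degree_zero]; exact WithBot.bot_lt_coe _
      · rw [sub_zero]
        exact Finset.dvd_sum fun j _ => Dvd.dvd.mul_right (hall j) _
  · rintro ⟨j₀, hj₀⟩
    rw [Finset.filter_congr (fun c _ => cond_iff hmon hsle hpdeg
      (∑ j, trunc m' (k j) * polyOf (c j)))]
    rw [← Fintype.card_subtype]
    let Θ : {c : Fin d → Fin m' → ZMod 2 //
        ((∑ j, trunc m' (k j) * polyOf (c j)) %ₘ p).degree < ((m' - m : ℕ) : WithBot ℕ)} →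
        (Fin (m' - m) → ZMod 2) × ({j : Fin d // j ≠ j₀} → Fin m' → ZMod 2) :=
      fun t => (fun i => ((∑ j, trunc m' (k j) * polyOf (t.1 j)) %ₘ p).coeff i,
        fun j => t.1 j.1)
    have hinj : Function.Injective Θ := by
      rintro ⟨c, hc⟩ ⟨c', hc'⟩ heq
      have h1 := congrArg Prod.fst heq
      have h2 := congrArg Prod.snd heq
      simp only [Θ] at h1 h2
      have hrest : ∀ j : Fin d, j ≠ j₀ → c j = c' j := fun j hj => congrFun h2 ⟨j, hj⟩
      have hg : ∑ j ∈ Finset.univ.erase j₀, trunc m' (k j) * polyOf (c j)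
          = ∑ j ∈ Finset.univ.erase j₀, trunc m' (k j) * polyOf (c' j) :=
        Finset.sum_congr rfl fun j hj => by rw [hrest j (Finset.ne_of_mem_erase hj)]
      have hc2 : ((∑ j, trunc m' (k j) * polyOf (c j)) %ₘ p).degree <
          ((m' - m : ℕ) : WithBot ℕ) := hc
      have hc2' : ((∑ j, trunc m' (k j) * polyOf (c' j)) %ₘ p).degree <
          ((m' - m : ℕ) : WithBot ℕ) := hc'
      have hL : (∑ j, trunc m' (k j) * polyOf (c j)) %ₘ p
          = (∑ j, trunc m' (k j) * polyOf (c' j)) %ₘ p := by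
        apply Polynomial.ext
        intro n
        by_cases hn : n < m' - m
        · exact congrFun h1 ⟨n, hn⟩
        · rw [Polynomial.coeff_eq_zero_of_degree_lt
            (hc2.trans_le (by exact_mod_cast Nat.le_of_not_lt hn)),
            Polynomial.coeff_eq_zero_of_degree_lt
            (hc2'.trans_le (by exact_mod_cast Nat.le_of_not_lt hn))]
      rw [hsplit c j₀, hsplit c' j₀, hg] at hL
      have hj0eq : c j₀ = c' j₀ := psi_inj hpr hmon hpdeg hj₀ _ _ _ hL
      exact Subtype.ext (funext fun j => by
        by_cases h : j = j₀
        · rw [h]; exact hj0eq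
        · exact hrest j h)
    have hsurj : Function.Surjective Θ := by
      rintro ⟨r, y⟩
      obtain ⟨x, hx⟩ := psi_surj hpr hmon hpdeg hj₀
        (∑ j ∈ Finset.univ.erase j₀, trunc m' (k j) *
          polyOf (if h : j = j₀ then (0 : Fin m' → ZMod 2) else y ⟨j, h⟩))
        (polyOf r) ((degree_polyOf_lt r).trans_le (by exact_mod_cast hsle))
      set c : Fin d → Fin m' → ZMod 2 := fun j => if h : j = j₀ then x else y ⟨j, h⟩ with hcdef
      have hc0 : c j₀ = x := by rw [hcdef]; simp
      have hLc : (∑ j, trunc m' (k j) * polyOf (c j)) %ₘ p = polyOf r := by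
        rw [hsplit c j₀, hc0]
        have hgeq : ∑ j ∈ Finset.univ.erase j₀, trunc m' (k j) * polyOf (c j)
            = ∑ j ∈ Finset.univ.erase j₀, trunc m' (k j) *
                polyOf (if h : j = j₀ then (0 : Fin m' → ZMod 2) else y ⟨j, h⟩) :=
          Finset.sum_congr rfl fun j hj => by
            have hjne := Finset.ne_of_mem_erase hj
            simp only [hcdef, dif_neg hjne]
        rw [hgeq]
        exact hx
      refine ⟨⟨c, by rw [hLc]; exact degree_polyOf_lt r⟩, ?_⟩
      have hfst : (fun i : Fin (m' - m) =>
          ((∑ j, trunc m' (k j) * polyOf (c j)) %ₘ p).coeff i) = r := by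
        funext i
        rw [hLc, coeff_polyOf, dif_pos i.isLt]
      have hsnd : (fun j : {j : Fin d // j ≠ j₀} => c j.1) = y := by
        funext j
        rw [hcdef]
        simp only [dif_neg j.2]
      exact Prod.ext hfst hsnd
    have hcards := Fintype.card_of_bijective ⟨hinj, hsurj⟩
    have hne : Fintype.card {j : Fin d // j ≠ j₀} = d - 1 := by
      rw [Fintype.card_subtype_compl, Fintype.card_subtype_eq, Fintype.card_fin]
    rw [hcards]
    simp only [Fintype.card_prod, Fintype.card_fun, Fintype.card_fin, ZMod.card, hne]
    rw [← pow_mul, ← pow_add]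
    congr 1
    have hd1 : d - 1 + 1 = d := Nat.succ_pred_eq_of_pos hd
    have hmul : m' * (d - 1) + m' = m' * d := by
      calc m' * (d - 1) + m' = m' * (d - 1 + 1) := by ring
        _ = m' * d := by rw [hd1]
    rw [← hmul]
    clear_value Θ
    clear hcards hinj hsurj hne Θ hsplit hpdeg hmon hj₀ hk hp hdeg hpr hp0
    generalize m' * (d - 1) = a
    omega
end

section
/- Let m ≤ m' be positive integers, let p ∈ 𝔽₂[x] be an irreducible polynomial with deg(p) = m', and let r, c ∈ 𝔽₂[x] with p not dividing r. Then the number of q ∈ G_{m'} such that r·q + c ≡ a (mod p) for some a ∈ 𝔽₂[x] with deg(a) < m'−m is at most 2^{m'−m}. -/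
open scoped BigOperators

attribute [local instance] Classical.propDecidable

lemma polyOf_coeff {n : ℕ} (co : Fin n → ZMod 2) (i : Fin n) :
    (polyOf co).coeff (i : ℕ) = co i := by
  classical
  simp only [polyOf, Polynomial.finset_sum_coeff, Polynomial.coeff_monomial]
  rw [Finset.sum_eq_single i]
  · simp
  · intro j _ hj
    simp [Fin.val_eq_val, hj]
  · simp

lemma polyOf_degree {n : ℕ} (co : Fin n → ZMod 2) :
    (polyOf co).degree < (n : WithBot ℕ) := by
  classical
  apply lt_of_le_of_lt (Polynomial.degree_sum_le _ _)
  apply Finset.sup_lt_iff (by exact_mod_cast WithBot.bot_lt_coe n) |>.mpr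
  intro i _
  exact lt_of_le_of_lt (Polynomial.degree_monomial_le _ _)
    (by exact_mod_cast i.isLt)

/-- with p not dividing r, at most 2^{m'−m} polynomials q ∈ G_{m'}
(parametrized by coefficient vectors) satisfy r·q + c ≡ a (mod p) with deg(a) < m'−m. -/
theorem stmt6 (m m' : ℕ) (hm : 0 < m) (hmm : m ≤ m')
    (p : Polynomial (ZMod 2)) (hp : Irreducible p) (hdeg : p.natDegree = m')
    (r c : Polynomial (ZMod 2)) (hr : ¬ p ∣ r) :
    (Finset.univ.filter (fun co : Fin m' → ZMod 2 =>
      ∃ a : Polynomial (ZMod 2), a.degree < ((m' - m : ℕ) : WithBot ℕ) ∧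
        p ∣ (r * polyOf co + c - a))).card ≤ 2^(m'-m) := by
  classical
  have hp0 : p ≠ 0 := hp.ne_zero
  have hpdeg : p.degree = (m' : WithBot ℕ) := by
    rw [Polynomial.degree_eq_natDegree hp0, hdeg]
  have key : ∀ d : Polynomial (ZMod 2), p ∣ d → d.degree < (m' : WithBot ℕ) → d = 0 := by
    intro d hdvd hdlt
    by_contra h0
    exact absurd (Polynomial.degree_le_of_dvd hdvd h0)
      (by rw [hpdeg]; exact not_le.mpr hdlt)
  set f : (Fin m' → ZMod 2) → (Fin (m'-m) → ZMod 2) := fun co =>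
    if h : (∃ a : Polynomial (ZMod 2), a.degree < ((m' - m : ℕ) : WithBot ℕ) ∧
        p ∣ (r * polyOf co + c - a)) then fun i => (Classical.choose h).coeff i else 0
    with hfdef
  have hinj : Set.InjOn f ((Finset.univ.filter (fun co : Fin m' → ZMod 2 =>
      ∃ a : Polynomial (ZMod 2), a.degree < ((m' - m : ℕ) : WithBot ℕ) ∧
        p ∣ (r * polyOf co + c - a))) : Finset (Fin m' → ZMod 2)) := by
    intro co1 hco1 co2 hco2 hfeq
    rw [Finset.mem_coe, Finset.mem_filter] at hco1 hco2
    obtain ⟨-, h1⟩ := hco1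
    obtain ⟨-, h2⟩ := hco2
    obtain ⟨ha1d, ha1dvd⟩ := Classical.choose_spec h1
    obtain ⟨ha2d, ha2dvd⟩ := Classical.choose_spec h2
    set a1 := Classical.choose h1
    set a2 := Classical.choose h2
    have hfeq' : ∀ i : Fin (m'-m), a1.coeff i = a2.coeff i := by
      intro i
      have := congrFun hfeq i
      simpa [hfdef, dif_pos h1, dif_pos h2] using this
    have ha : a1 = a2 := by
      ext i
      rcases lt_or_ge i (m'-m) with hi | hi
      · exact hfeq' ⟨i, hi⟩
      · rw [Polynomial.coeff_eq_zero_of_degree_lt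
          (lt_of_lt_of_le ha1d (by exact_mod_cast hi)),
          Polynomial.coeff_eq_zero_of_degree_lt
          (lt_of_lt_of_le ha2d (by exact_mod_cast hi))]
    have hdvd : p ∣ r * (polyOf co1 - polyOf co2) := by
      have := dvd_sub ha1dvd ha2dvd
      rw [ha] at this
      convert this using 1
      ring
    have hq : polyOf co1 - polyOf co2 = 0 := by
      apply key
      · exact (hp.prime.dvd_mul.mp hdvd).resolve_left hr
      · exact lt_of_le_of_lt (Polynomial.degree_sub_le _ _)
          (max_lt (polyOf_degree _) (polyOf_degree _))
    have hq' : polyOf co1 = polyOf co2 := sub_eq_zero.mp hq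
    funext i
    rw [← polyOf_coeff co1 i, ← polyOf_coeff co2 i, hq']
  calc _ ≤ (Finset.univ : Finset (Fin (m'-m) → ZMod 2)).card :=
        Finset.card_le_card_of_injOn f (fun co _ => Finset.mem_univ (f co)) hinj
    _ = 2^(m'-m) := by simp [Finset.card_univ]
end

section
/- Let α ≥ 1 be an integer and let λ > 1/(2α) be a real number. Then Σ_{v=α}^{∞} Σ_{0<a_v<⋯<a_1} 2^{−2λ(a_1+⋯+a_α)} = (1/(2^{2λα} − 2)) ∏_{i=1}^{α−1} 1/(2^{2λ i} − 1), where the inner sum ranges over all strictly decreasing v-tuples of positive integers a_1 > ⋯ > a_v > 0 and the summand involves only the α largest entries a_1,…,a_α. -/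
open scoped BigOperators

attribute [local instance] Classical.propDecidable

namespace Stmt10Aux

open Finset ENNReal

/-- partial sums from the right of (g j + 1) -/
def acc {v : ℕ} (g : Fin v → ℕ) (i : Fin v) : ℕ :=
  ∑ j ∈ Finset.univ.filter (fun j => i ≤ j), (g j + 1)

lemma acc_split {v : ℕ} (g : Fin v → ℕ) (i : Fin v) :
    acc g i = g i + 1 + ∑ j ∈ Finset.univ.filter (fun j => i < j), (g j + 1) := by
  have h : Finset.univ.filter (fun j : Fin v => i ≤ j)
      = insert i (Finset.univ.filter (fun j => i < j)) := by
    ext j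
    simp only [mem_filter, mem_univ, true_and, mem_insert, Fin.le_def, Fin.lt_def, Fin.ext_iff]
    omega
  rw [acc, h, Finset.sum_insert (by simp)]

lemma acc_last {v : ℕ} (g : Fin v → ℕ) (i : Fin v) (h : (i:ℕ) + 1 = v) :
    acc g i = g i + 1 := by
  rw [acc_split]
  have : Finset.univ.filter (fun j : Fin v => i < j) = ∅ := by
    ext j
    simp only [mem_filter, mem_univ, true_and, Fin.lt_def, notMem_empty, iff_false]
    have := j.isLt
    omega
  simp [this]

lemma acc_step {v : ℕ} (g : Fin v → ℕ) (i : Fin v) (h : (i:ℕ) + 1 < v) :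
    acc g i = g i + 1 + acc g ⟨(i:ℕ)+1, h⟩ := by
  have h2 : Finset.univ.filter (fun j : Fin v => i < j)
      = Finset.univ.filter (fun j : Fin v => (⟨(i:ℕ)+1, h⟩ : Fin v) ≤ j) := by
    ext j
    simp only [mem_filter, mem_univ, true_and, Fin.lt_def, Fin.le_def]
    omega
  rw [acc_split, acc, h2]

lemma acc_strictAnti {v : ℕ} (g : Fin v → ℕ) : StrictAnti (acc g) := by
  intro i k hik
  apply Finset.sum_lt_sum_of_subset
  · intro j hj
    simp only [mem_filter, mem_univ, true_and] at *
    exact le_trans hik.le hj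
  · exact (mem_filter.2 ⟨mem_univ i, le_refl i⟩)
  · simp only [mem_filter, mem_univ, true_and]
    exact not_le.2 hik
  · omega
  · intro j _ _; omega

lemma acc_pos {v : ℕ} (g : Fin v → ℕ) (i : Fin v) : 0 < acc g i := by
  rw [acc_split]; omega

def ginv {v : ℕ} (a : Fin v → ℕ) (i : Fin v) : ℕ :=
  if h : (i:ℕ) + 1 < v then a i - a ⟨(i:ℕ)+1, h⟩ - 1 else a i - 1

lemma acc_ginv {v : ℕ} (a : Fin v → ℕ) (ha : StrictAnti a) (hpos : ∀ i, 0 < a i) :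
    ∀ (n : ℕ) (i : Fin v), v - 1 - (i:ℕ) = n → acc (ginv a) i = a i := by
  intro n
  induction n with
  | zero =>
    intro i hn
    have hi := i.isLt
    have h1 : (i:ℕ) + 1 = v := by omega
    rw [acc_last _ _ h1]
    simp only [ginv]
    rw [dif_neg (by omega)]
    have := hpos i
    omega
  | succ n ih =>
    intro i hn
    have hi := i.isLt
    have h1 : (i:ℕ) + 1 < v := by omega
    have hlt : a ⟨(i:ℕ)+1, h1⟩ < a i := ha (by simp [Fin.lt_def])
    rw [acc_step _ _ h1, ih ⟨(i:ℕ)+1, h1⟩ (by simp; omega)]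
    simp only [ginv]
    rw [dif_pos h1]
    omega

noncomputable def decEquiv (v : ℕ) : (Fin v → ℕ) ≃ decTuples v where
  toFun g := ⟨acc g, acc_strictAnti g, acc_pos g⟩
  invFun a := ginv a.1
  left_inv g := by
    funext i
    by_cases h : (i:ℕ) + 1 < v
    · simp only [ginv]
      rw [dif_pos h, acc_step g i h]; omega
    · have h1 : (i:ℕ) + 1 = v := by have := i.isLt; omega
      simp only [ginv]
      rw [dif_neg h, acc_last g i h1]; omega
  right_inv a := by
    apply Subtype.ext
    funext i
    exact acc_ginv a.1 a.2.1 a.2.2 (v - 1 - (i:ℕ)) i rfl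

lemma card_filter_lt {v m : ℕ} (h : m ≤ v) :
    (Finset.univ.filter (fun i : Fin v => (i:ℕ) < m)).card = m := by
  have : Finset.univ.filter (fun i : Fin v => (i:ℕ) < m)
      = Finset.map (Fin.castLEEmb h) Finset.univ := by
    ext x
    simp only [mem_filter, mem_univ, true_and, Finset.mem_map]
    constructor
    · intro hx
      refine ⟨⟨(x:ℕ), hx⟩, ?_⟩
      apply Fin.ext
      simp
    · rintro ⟨y, rfl⟩
      simpa using y.isLt
  rw [this, Finset.card_map, Finset.card_univ, Fintype.card_fin]

lemma weight_sum {v α : ℕ} (hav : α ≤ v) (g : Fin v → ℕ) :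
    ∑ i ∈ Finset.univ.filter (fun i : Fin v => (i:ℕ) < α), acc g i
      = ∑ j : Fin v, min ((j:ℕ)+1) α * (g j + 1) := by
  calc ∑ i ∈ Finset.univ.filter (fun i : Fin v => (i:ℕ) < α), acc g i
      = ∑ i ∈ Finset.univ.filter (fun i : Fin v => (i:ℕ) < α),
          ∑ j : Fin v, if i ≤ j then g j + 1 else 0 := by
        refine Finset.sum_congr rfl fun i _ => ?_
        rw [acc, Finset.sum_filter]
    _ = ∑ j : Fin v, ∑ i ∈ Finset.univ.filter (fun i : Fin v => (i:ℕ) < α),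
          if i ≤ j then g j + 1 else 0 := Finset.sum_comm
    _ = ∑ j : Fin v, min ((j:ℕ)+1) α * (g j + 1) := by
        refine Finset.sum_congr rfl fun j _ => ?_
        rw [← Finset.sum_filter, Finset.filter_filter, Finset.sum_const, smul_eq_mul]
        congr 1
        have : (Finset.univ.filter (fun i : Fin v => (i:ℕ) < α ∧ i ≤ j))
            = Finset.univ.filter (fun i : Fin v => (i:ℕ) < min ((j:ℕ)+1) α) := by
          ext i
          simp only [mem_filter, mem_univ, true_and, Fin.le_def]
          omega
        rw [this, card_filter_lt (by have := j.isLt; omega)]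

lemma tsum_pi_prod : ∀ (n : ℕ) (h : Fin n → ℕ → ENNReal),
    (∑' g : Fin n → ℕ, ∏ j, h j (g j)) = ∏ j, ∑' k, h j k := by
  intro n
  induction n with
  | zero =>
    intro h
    rw [tsum_eq_single (fun i => i.elim0) (fun b hb => absurd (Subsingleton.elim b _) hb)]
    simp
  | succ n ih =>
    intro h
    rw [← (Fin.consEquiv (fun _ : Fin (n+1) => ℕ)).tsum_eq, ENNReal.tsum_prod']
    have : ∀ (x : ℕ) (g : Fin n → ℕ),
        (∏ j, h j ((Fin.consEquiv (fun _ : Fin (n+1) => ℕ)) (x, g) j))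
          = h 0 x * ∏ j : Fin n, h j.succ (g j) := by
      intro x g
      rw [Fin.prod_univ_succ]
      simp [Fin.consEquiv]
    simp only [this]
    rw [Fin.prod_univ_succ]
    simp only [ENNReal.tsum_mul_left, ENNReal.tsum_mul_right]
    rw [ih (fun j => h j.succ)]

end Stmt10Aux


/-- Σ_{v=α}^{∞} Σ_{0<a_v<⋯<a_1} 2^{−2λ(a_1+⋯+a_α)}
= (1/(2^{2λα}−2)) ∏_{i=1}^{α−1} 1/(2^{2λi}−1). -/
theorem stmt10 (α : ℕ) (hα : 1 ≤ α) (lam : ℝ) (hlam : 1/(2*(α:ℝ)) < lam) :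
    ∑' v : {v : ℕ // α ≤ v}, ∑' a : decTuples v.1,
        (2:ℝ) ^ (-(2*lam *
          (∑ i ∈ Finset.univ.filter (fun i : Fin v.1 => (i:ℕ) < α), (a.1 i : ℝ))))
      = (1/((2:ℝ)^(2*lam*(α:ℝ)) - 2)) *
          ∏ i ∈ Finset.Icc 1 (α-1), 1/((2:ℝ)^(2*lam*(i:ℝ)) - 1) := by
  have hαR : (0:ℝ) < α := by exact_mod_cast hα
  have hlam0 : 0 < lam := lt_trans (by positivity) hlam
  set r : ℝ := (2:ℝ) ^ (-(2*lam)) with hr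
  have hr0 : 0 < r := Real.rpow_pos_of_pos two_pos _
  have hr1 : r < 1 := Real.rpow_lt_one_of_one_lt_of_neg one_lt_two (by nlinarith)
  have hkey : 1 < 2*lam*(α:ℝ) := by
    rw [div_lt_iff₀ (by positivity)] at hlam
    nlinarith
  have hrpow : ∀ k : ℕ, r ^ k = (2:ℝ) ^ (-(2*lam*(k:ℝ))) := by
    intro k
    rw [hr, ← Real.rpow_natCast ((2:ℝ) ^ (-(2*lam))) k,
      ← Real.rpow_mul (by norm_num : (0:ℝ) ≤ 2)]
    congr 1
    ring
  have hy : ∀ k : ℕ, (2:ℝ) ^ (2*lam*(k:ℝ)) * r ^ k = 1 := by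
    intro k
    rw [hrpow k, ← Real.rpow_add two_pos]
    rw [show 2*lam*(k:ℝ) + -(2*lam*(k:ℝ)) = 0 by ring, Real.rpow_zero]
  have hterm : ∀ k : ℕ, 1 ≤ k →
      r^k * (1 - r^k)⁻¹ = 1/((2:ℝ)^(2*lam*(k:ℝ)) - 1) := by
    intro k hk
    have hyk := hy k
    have hy0 : (0:ℝ) < (2:ℝ)^(2*lam*(k:ℝ)) := Real.rpow_pos_of_pos two_pos _
    have hrk0 : 0 < r^k := pow_pos hr0 k
    have hrk1 : r^k < 1 := pow_lt_one₀ hr0.le hr1 (by omega)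
    have h1 : (0:ℝ) < 1 - r^k := by linarith
    have hy1 : 1 < (2:ℝ)^(2*lam*(k:ℝ)) := by nlinarith [mul_pos hy0 h1]
    rw [inv_eq_one_div, mul_one_div, div_eq_div_iff h1.ne' (by linarith : (2:ℝ)^(2*lam*(k:ℝ)) - 1 ≠ 0)]
    linear_combination hyk
  have hyα : 2 < (2:ℝ)^(2*lam*(α:ℝ)) := by
    calc (2:ℝ) = (2:ℝ)^(1:ℝ) := (Real.rpow_one 2).symm
    _ < _ := Real.rpow_lt_rpow_of_exponent_lt one_lt_two hkey
  have hrα0 : 0 < r^α := pow_pos hr0 α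
  have hrα : 2 * r^α < 1 := by
    nlinarith [hy α, mul_pos (sub_pos.2 hyα) hrα0]
  have h1α : (0:ℝ) < 1 - r^α := by linarith
  have h2α : (0:ℝ) < 1 - 2*r^α := by linarith
  have hd : 1 - r^α * (1-r^α)⁻¹ = (1 - 2*r^α)/(1-r^α) := by
    field_simp
    ring
  have hscalar : (r^α * (1 - r^α)⁻¹) * (1 - r^α * (1 - r^α)⁻¹)⁻¹
      = 1/((2:ℝ)^(2*lam*(α:ℝ)) - 2) := by
    rw [hd, inv_div]
    have : r^α * (1-r^α)⁻¹ * ((1-r^α)/(1-2*r^α)) = r^α/(1-2*r^α) := by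
      field_simp
    rw [this, div_eq_div_iff h2α.ne' (by linarith : (2:ℝ)^(2*lam*(α:ℝ)) - 2 ≠ 0)]
    linear_combination hy α
  -- ENNReal setup
  set Q : ENNReal := ENNReal.ofReal r with hQ
  have hQtop : Q ≠ ⊤ := ENNReal.ofReal_ne_top
  have hQ1 : Q < 1 := by
    rw [hQ, ← ENNReal.ofReal_one]
    exact ENNReal.ofReal_lt_ofReal_iff_of_nonneg hr0.le |>.2 hr1
  have hQpowlt : ∀ w : ℕ, 1 ≤ w → Q^w < 1 := by
    intro w hw
    exact pow_lt_one₀ zero_le hQ1 (by omega)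
  set F : ℕ → ENNReal := fun w => Q^w * (1 - Q^w)⁻¹ with hF
  have hFtop : ∀ w : ℕ, 1 ≤ w → F w ≠ ⊤ := by
    intro w hw
    refine ENNReal.mul_ne_top (ENNReal.pow_ne_top hQtop) (ENNReal.inv_ne_top.mpr ?_)
    intro h
    exact absurd (tsub_eq_zero_iff_le.mp h) (not_le.2 (hQpowlt w hw))
  have hQval : ∀ w : ℕ, (Q^w).toReal = r^w := by
    intro w
    rw [ENNReal.toReal_pow, hQ, ENNReal.toReal_ofReal hr0.le]
  have hFval : ∀ w : ℕ, 1 ≤ w → (F w).toReal = r^w * (1 - r^w)⁻¹ := by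
    intro w hw
    rw [hF]
    rw [ENNReal.toReal_mul, ENNReal.toReal_inv,
      ENNReal.toReal_sub_of_le (hQpowlt w hw).le ENNReal.one_ne_top,
      ENNReal.toReal_one, hQval]
  have hFα_le1 : F α ≤ 1 := by
    rw [← ENNReal.toReal_le_toReal (hFtop α hα) ENNReal.one_ne_top]
    rw [hFval α hα, ENNReal.toReal_one, ← div_eq_mul_inv]
    rw [div_le_one h1α]
    linarith
  set C : ENNReal := ∏ j ∈ Finset.range (α-1), F (j+1) with hC
  have hCtop : C ≠ ⊤ := ENNReal.prod_ne_top (fun j _ => hFtop (j+1) (by omega))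
  -- inner sum computation
  have hN : ∀ (v : ℕ), α ≤ v →
      (∑' a : decTuples v, Q ^ (∑ i ∈ Finset.univ.filter
          (fun i : Fin v => (i:ℕ) < α), a.1 i)) = C * F α ^ (v - α + 1) := by
    intro v hv
    rw [← (Stmt10Aux.decEquiv v).tsum_eq]
    have step1 : ∀ g : Fin v → ℕ,
        Q ^ (∑ i ∈ Finset.univ.filter (fun i : Fin v => (i:ℕ) < α),
            ((Stmt10Aux.decEquiv v) g).1 i)
          = ∏ j : Fin v, (Q ^ (min ((j:ℕ)+1) α)) ^ (g j + 1) := by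
      intro g
      have h0 : ((Stmt10Aux.decEquiv v) g).1 = Stmt10Aux.acc g := rfl
      rw [h0, Stmt10Aux.weight_sum hv, ← Finset.prod_pow_eq_pow_sum]
      exact Finset.prod_congr rfl fun j _ => (pow_mul Q _ _)
    rw [tsum_congr step1, Stmt10Aux.tsum_pi_prod v
      (fun j n => (Q ^ (min ((j:ℕ)+1) α)) ^ (n + 1))]
    have step2 : ∏ j : Fin v, (∑' k : ℕ, (Q ^ (min ((j:ℕ)+1) α)) ^ (k + 1))
        = ∏ j : Fin v, F (min ((j:ℕ)+1) α) :=
      Finset.prod_congr rfl fun j _ => ENNReal.tsum_geometric_add_one _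
    rw [step2, Fin.prod_univ_eq_prod_range (fun j => F (min (j+1) α)) v]
    have hR : Finset.range v = Finset.range (α + (v - α)) := by congr 1; omega
    rw [hR, Finset.prod_range_add]
    have h1 : ∀ j ∈ Finset.range (v - α), F (min (α + j + 1) α) = F α :=
      fun j _ => by rw [min_eq_right (by omega)]
    rw [Finset.prod_congr rfl h1, Finset.prod_const, Finset.card_range]
    have hfirst : ∏ j ∈ Finset.range α, F (min (j+1) α) = C * F α := by
      have hA : Finset.range α = Finset.range ((α-1)+1) := by congr 1; omega
      rw [hA, Finset.prod_range_succ]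
      congr 1
      · rw [hC]
        refine Finset.prod_congr rfl fun j hj => ?_
        rw [min_eq_left (by simp at hj; omega)]
      · rw [show (α-1)+1 = α by omega, min_self]
    rw [hfirst, mul_assoc, ← pow_succ']
  -- pointwise real/ENNReal
  have hpoint : ∀ (v : ℕ) (a : decTuples v),
      (2:ℝ) ^ (-(2*lam * (∑ i ∈ Finset.univ.filter
          (fun i : Fin v => (i:ℕ) < α), (a.1 i : ℝ))))
        = (Q ^ (∑ i ∈ Finset.univ.filter
            (fun i : Fin v => (i:ℕ) < α), a.1 i)).toReal := by
    intro v a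
    rw [hQval, hrpow]
    congr 2
    rw [Nat.cast_sum]
  have hconv1 : ∀ v : {v : ℕ // α ≤ v},
      (∑' a : decTuples v.1, (2:ℝ) ^ (-(2*lam * (∑ i ∈ Finset.univ.filter
          (fun i : Fin v.1 => (i:ℕ) < α), (a.1 i : ℝ)))))
        = (C * F α ^ ((v:ℕ) - α + 1)).toReal := by
    intro v
    rw [← hN v.1 v.2, ENNReal.tsum_toReal_eq (fun a => ENNReal.pow_ne_top hQtop)]
    exact tsum_congr (hpoint v.1)
  rw [tsum_congr hconv1]
  rw [← ENNReal.tsum_toReal_eq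
    (fun v => ENNReal.mul_ne_top hCtop (ENNReal.pow_ne_top (hFtop α hα)))]
  -- outer geometric sum
  have houter : (∑' v : {v : ℕ // α ≤ v}, C * F α ^ ((v:ℕ) - α + 1))
      = C * (F α * (1 - F α)⁻¹) := by
    let e : ℕ ≃ {v : ℕ // α ≤ v} :=
      ⟨fun n => ⟨α + n, Nat.le_add_right _ _⟩, fun v => (v:ℕ) - α,
       fun n => by simp, fun v => Subtype.ext (by simpa using Nat.add_sub_cancel' v.2)⟩
    rw [← e.tsum_eq]
    have : ∀ n : ℕ, C * F α ^ (((e n : {v : ℕ // α ≤ v}) : ℕ) - α + 1)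
        = C * F α ^ (n + 1) := by
      intro n
      have : ((e n : {v : ℕ // α ≤ v}) : ℕ) = α + n := rfl
      rw [this, Nat.add_sub_cancel_left]
    rw [tsum_congr this, ENNReal.tsum_mul_left, ENNReal.tsum_geometric_add_one]
  rw [houter]
  -- final real computation
  rw [ENNReal.toReal_mul, ENNReal.toReal_mul, ENNReal.toReal_inv,
    ENNReal.toReal_sub_of_le hFα_le1 ENNReal.one_ne_top, ENNReal.toReal_one,
    hFval α hα]
  have hCval : C.toReal = ∏ j ∈ Finset.range (α-1), (r^(j+1) * (1-r^(j+1))⁻¹) := by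
    rw [hC, ENNReal.toReal_prod]
    exact Finset.prod_congr rfl fun j _ => hFval (j+1) (by omega)
  rw [hCval]
  have hprod : ∏ i ∈ Finset.Icc 1 (α-1), (1/((2:ℝ)^(2*lam*(i:ℝ)) - 1))
      = ∏ j ∈ Finset.range (α-1), (r^(j+1) * (1 - r^(j+1))⁻¹) := by
    have h1 : Finset.Icc 1 (α-1) = Finset.Ico 1 α := by
      rw [← Finset.Ico_add_one_right_eq_Icc]
      congr 1
      omega
    rw [h1, Finset.prod_Ico_eq_prod_range]
    refine Finset.prod_congr rfl fun j _ => ?_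
    rw [← hterm (1+j) (by omega), add_comm 1 j]
  rw [hprod, ← hscalar]
  ring
end

section
/- Let λ > 0 be a real number and let t, m' ≥ 1 be integers. Then the sum over all strictly decreasing t-tuples of integers a_1 > a_2 > ⋯ > a_t ≥ m' of 2^{−2λ(a_1+⋯+a_t)} converges and equals 2^{−2λ t (m'−1)} ∏_{i=1}^{t} 1/(2^{2λ i} − 1). -/
open scoped BigOperators

attribute [local instance] Classical.propDecidable

section myaux

private lemma my_hasSum_pi_fin : ∀ (n : ℕ) (g : Fin n → ℕ → ℝ) (S : Fin n → ℝ),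
    (∀ i k, 0 ≤ g i k) → (∀ i, HasSum (g i) (S i)) →
    HasSum (fun c : Fin n → ℕ => ∏ i, g i (c i)) (∏ i, S i) := by
  intro n
  induction n with
  | zero =>
    intro g S _ _
    have h : HasSum (fun c : Fin 0 → ℕ => ∏ i, g i (c i))
        ((fun c : Fin 0 → ℕ => ∏ i, g i (c i)) (fun _ => 0)) :=
      hasSum_single _ (fun b' hb' => absurd (funext fun i => i.elim0) hb')
    simpa using h
  | succ n ih =>
    intro g S hpos hsum
    have hih := ih (fun i => g i.succ) (fun i => S i.succ)
      (fun i k => hpos _ _) (fun i => hsum i.succ)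
    have hsummable := Summable.mul_of_nonneg (hsum 0).summable hih.summable
      (Pi.le_def.mpr fun k => hpos 0 k)
      (Pi.le_def.mpr fun c => Finset.prod_nonneg fun i _ => hpos _ _)
    have h1 : HasSum (fun p : ℕ × (Fin n → ℕ) => g 0 p.1 * ∏ i : Fin n, g i.succ (p.2 i))
        (S 0 * ∏ i : Fin n, S i.succ) := by
      have := (hsum 0).mul hih hsummable
      exact this
    let e : (Fin (n+1) → ℕ) ≃ ℕ × (Fin n → ℕ) :=
      ⟨fun c => (c 0, fun i => c i.succ), fun p => Fin.cons p.1 p.2,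
        fun c => funext fun i => Fin.cases rfl (fun _ => rfl) i,
        fun p => rfl⟩
    have h2 := (e.hasSum_iff).2 h1
    have h3 : (fun c : Fin (n+1) → ℕ => ∏ i, g i (c i))
        = (fun p : ℕ × (Fin n → ℕ) => g 0 p.1 * ∏ i : Fin n, g i.succ (p.2 i)) ∘ e := by
      funext c
      simp only [Function.comp_apply, Fin.prod_univ_succ]
      rfl
    rw [h3, Fin.prod_univ_succ]
    exact h2

private lemma my_geom (x : ℝ) (hx : 0 < x) :
    HasSum (fun k : ℕ => (2:ℝ) ^ (-(x * ((k:ℝ)+1)))) (1/((2:ℝ)^x - 1)) := by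
  set R : ℝ := (2:ℝ)^x with hR
  have hR1 : (1:ℝ) < R :=
    Real.one_lt_rpow_iff_of_pos (by norm_num) |>.2 (Or.inl ⟨by norm_num, hx⟩)
  set r : ℝ := (2:ℝ)^(-x) with hr
  have hr0 : 0 < r := Real.rpow_pos_of_pos (by norm_num) _
  have hr1 : r < 1 := Real.rpow_lt_one_of_one_lt_of_neg (by norm_num) (by linarith)
  have hgeo := (hasSum_geometric_of_lt_one hr0.le hr1).mul_left r
  have hfun : (fun k : ℕ => r * r ^ k) = fun k : ℕ => (2:ℝ) ^ (-(x * ((k:ℝ)+1))) := by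
    funext k
    have : (-(x * ((k:ℝ)+1))) = (-x) * ((k:ℝ)+1) := by ring
    rw [this, Real.rpow_mul (by norm_num : (0:ℝ) ≤ 2), ← hr]
    have : ((k:ℝ)+1) = ((k+1 : ℕ) : ℝ) := by push_cast; ring
    rw [this, Real.rpow_natCast, pow_succ, mul_comm]
  have hval : r * (1 - r)⁻¹ = 1/(R - 1) := by
    have hrR : r = R⁻¹ := by rw [hr, hR, ← Real.rpow_neg (by norm_num : (0:ℝ) ≤ 2)]
    have hR0 : R ≠ 0 := by positivity
    have h1r : R - 1 ≠ 0 := sub_ne_zero.2 (ne_of_gt hR1)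
    have h2 : 1 - R⁻¹ = (R - 1)/R := by field_simp
    rw [hrR, h2, inv_div, ← mul_div_assoc, inv_mul_cancel₀ hR0]
  rw [hfun, hval] at hgeo
  exact hgeo

end myaux

/-- Σ_{m'≤a_t<⋯<a_1} 2^{−2λ(a_1+⋯+a_t)}
= 2^{−2λt(m'−1)} ∏_{i=1}^{t} 1/(2^{2λi}−1). -/
theorem stmt11 (lam : ℝ) (hlam : 0 < lam) (t m' : ℕ) (ht : 1 ≤ t) (hm' : 1 ≤ m') :
    HasSum (fun a : {a : Fin t → ℕ // StrictAnti a ∧ ∀ i, m' ≤ a i} =>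
        (2:ℝ) ^ (-(2*lam * (∑ i, (a.1 i : ℝ)))))
      ((2:ℝ) ^ (-(2*lam*(t:ℝ)*((m':ℝ)-1))) *
        ∏ i ∈ Finset.Icc 1 t, 1/((2:ℝ)^(2*lam*(i:ℝ)) - 1)) := by
  obtain ⟨n, rfl⟩ : ∃ n, t = n + 1 := ⟨t - 1, (Nat.succ_pred_eq_of_pos ht).symm⟩
  -- the forward map
  set F : (Fin (n+1) → ℕ) → (Fin (n+1) → ℕ) :=
    fun c i => (m' - 1) + ∑ j ∈ Finset.univ.filter (fun j => i ≤ j), (c j + 1) with hFdef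
  -- basic filter lemmas
  have hlastfil : Finset.univ.filter (fun j : Fin (n+1) => Fin.last n ≤ j) = {Fin.last n} := by
    ext j
    simp [Fin.last_le_iff, eq_comm]
  have hsplit : ∀ i : Fin n,
      Finset.univ.filter (fun j : Fin (n+1) => i.castSucc ≤ j)
        = insert i.castSucc (Finset.univ.filter (fun j => i.succ ≤ j)) := by
    intro i
    ext j
    simp only [Finset.mem_filter, Finset.mem_univ, true_and, Finset.mem_insert]
    constructor
    · intro h
      rcases eq_or_lt_of_le h with h' | h'
      · exact Or.inl h'.symm
      · exact Or.inr ((Fin.castSucc_lt_iff_succ_le).1 h')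
    · rintro (rfl | h)
      · exact le_refl _
      · exact le_of_lt ((Fin.castSucc_lt_iff_succ_le).2 h)
  have hnotmem : ∀ i : Fin n,
      i.castSucc ∉ Finset.univ.filter (fun j : Fin (n+1) => i.succ ≤ j) := by
    intro i
    simp [Fin.castSucc_lt_iff_succ_le.not.1 (lt_irrefl i.castSucc)]
  -- F c is strictly decreasing and bounded below by m'
  have hFanti : ∀ c, StrictAnti (F c) := by
    intro c i i' hii'
    have hsub : Finset.univ.filter (fun j : Fin (n+1) => i' ≤ j)
        ⊆ Finset.univ.filter (fun j => i ≤ j) := by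
      intro j hj
      simp only [Finset.mem_filter, Finset.mem_univ, true_and] at *
      exact le_trans hii'.le hj
    have hmem : i ∈ Finset.univ.filter (fun j : Fin (n+1) => i ≤ j) := by
      simp
    have hlt : ∑ j ∈ Finset.univ.filter (fun j : Fin (n+1) => i' ≤ j), (c j + 1)
        < ∑ j ∈ Finset.univ.filter (fun j => i ≤ j), (c j + 1) := by
      refine Finset.sum_lt_sum_of_subset hsub hmem ?_ (by omega) (fun j _ _ => by omega)
      simp only [Finset.mem_filter, Finset.mem_univ, true_and]
      exact not_le.2 hii'
    simpa [hFdef] using Nat.add_lt_add_left hlt (m' - 1)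
  have hFge : ∀ c i, m' ≤ F c i := by
    intro c i
    have h1 : 1 ≤ ∑ j ∈ Finset.univ.filter (fun j : Fin (n+1) => i ≤ j), (c j + 1) := by
      have hmem : i ∈ Finset.univ.filter (fun j : Fin (n+1) => i ≤ j) := by simp
      calc 1 ≤ c i + 1 := by omega
        _ ≤ _ := Finset.single_le_sum (f := fun j => c j + 1)
          (fun j _ => Nat.zero_le _) hmem
    simp only [hFdef]
    omega
  -- the inverse map
  set B : (Fin (n+1) → ℕ) → Fin (n+1) → ℕ :=
    fun a i => Fin.lastCases (m' - 1) (fun j => a j.succ) i with hBdef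
  set G : (Fin (n+1) → ℕ) → Fin (n+1) → ℕ := fun a i => a i - B a i - 1 with hGdef
  have hGF : ∀ c, G (F c) = c := by
    intro c
    funext i
    induction i using Fin.lastCases with
    | last =>
      have hB : B (F c) (Fin.last n) = m' - 1 := by simp [hBdef]
      have hF : F c (Fin.last n) = (m' - 1) + (c (Fin.last n) + 1) := by
        simp only [hFdef]
        rw [hlastfil, Finset.sum_singleton]
      simp only [hGdef, hB, hF]
      omega
    | cast i =>
      have hB : B (F c) i.castSucc = F c i.succ := by simp [hBdef]
      have hF : F c i.castSucc = (m' - 1) + ((c i.castSucc + 1)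
          + ∑ j ∈ Finset.univ.filter (fun j : Fin (n+1) => i.succ ≤ j), (c j + 1)) := by
        simp only [hFdef]
        rw [hsplit i, Finset.sum_insert (hnotmem i)]
      have hF2 : (m' - 1) ≤ F c i.succ := by simp only [hFdef]; omega
      have hF3 : F c i.succ = (m' - 1)
          + ∑ j ∈ Finset.univ.filter (fun j : Fin (n+1) => i.succ ≤ j), (c j + 1) := rfl
      simp only [hGdef, hB, hF, hF3]
      omega
  have hFG : ∀ a : Fin (n+1) → ℕ, StrictAnti a → (∀ i, m' ≤ a i) → F (G a) = a := by
    intro a hanti hage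
    have key : ∀ i : Fin (n+1),
        ∑ j ∈ Finset.univ.filter (fun j => i ≤ j), (G a j + 1) = a i - (m' - 1) := by
      intro i
      induction i using Fin.reverseInduction with
      | last =>
        have hB : B a (Fin.last n) = m' - 1 := by simp [hBdef]
        have := hage (Fin.last n)
        rw [hlastfil, Finset.sum_singleton]
        simp only [hGdef, hB]
        omega
      | cast i ih =>
        have hB : B a i.castSucc = a i.succ := by simp [hBdef]
        have hlt : a i.succ < a i.castSucc := hanti (Fin.castSucc_lt_succ (i := i))
        have := hage i.succ
        rw [hsplit i, Finset.sum_insert (hnotmem i), ih]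
        simp only [hGdef, hB]
        omega
    funext i
    have := hage i
    simp only [hFdef, key i]
    omega
  -- the equivalence
  set T := {a : Fin (n+1) → ℕ // StrictAnti a ∧ ∀ i, m' ≤ a i} with hT
  have hbij : Function.Bijective (fun c => (⟨F c, hFanti c, hFge c⟩ : T)) := by
    constructor
    · intro c c' h
      have : F c = F c' := congrArg Subtype.val h
      rw [← hGF c, ← hGF c', this]
    · rintro ⟨a, ha1, ha2⟩
      exact ⟨G a, Subtype.ext (hFG a ha1 ha2)⟩
  set e := Equiv.ofBijective _ hbij with he
  rw [← e.hasSum_iff]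
  -- sum identity over ℕ
  have hsum_eq : ∀ c : Fin (n+1) → ℕ,
      ∑ i, F c i = (n+1) * (m' - 1) + ∑ j : Fin (n+1), ((j:ℕ) + 1) * (c j + 1) := by
    intro c
    simp only [hFdef]
    rw [Finset.sum_add_distrib, Finset.sum_const, Finset.card_univ, Fintype.card_fin,
      smul_eq_mul]
    congr 1
    have : ∀ i : Fin (n+1), ∑ j ∈ Finset.univ.filter (fun j => i ≤ j), (c j + 1)
        = ∑ j : Fin (n+1), if i ≤ j then c j + 1 else 0 := fun i => Finset.sum_filter _ _
    simp only [this]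
    rw [Finset.sum_comm]
    refine Finset.sum_congr rfl fun j _ => ?_
    rw [← Finset.sum_filter, Finset.sum_const, smul_eq_mul]
    congr 1
    have : Finset.univ.filter (fun i : Fin (n+1) => i ≤ j) = Finset.Iic j := by
      ext x; simp
    rw [this, Fin.card_Iic]
  -- the coordinate summands
  set g : Fin (n+1) → ℕ → ℝ :=
    fun j k => (2:ℝ) ^ (-((2*lam*((j:ℕ)+1)) * ((k:ℝ)+1))) with hgdef
  have hgpos : ∀ j k, 0 ≤ g j k := fun j k => (Real.rpow_pos_of_pos (by norm_num) _).le
  have hgsum : ∀ j : Fin (n+1),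
      HasSum (g j) (1/((2:ℝ)^(2*lam*((j:ℕ)+1:ℝ)) - 1)) := by
    intro j
    have hx : (0:ℝ) < 2*lam*((j:ℕ)+1) := by positivity
    exact my_geom _ hx
  have hbig := (my_hasSum_pi_fin (n+1) g _ hgpos hgsum).mul_left
    ((2:ℝ) ^ (-(2*lam*((((n+1) * (m'-1) : ℕ)) : ℝ))))
  -- identify the function
  have hm'cast : (((m' - 1 : ℕ)) : ℝ) = (m' : ℝ) - 1 := by
    have := Nat.cast_sub hm' (R := ℝ); simpa using this
  have hfun : (fun c : Fin (n+1) → ℕ =>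
        (2:ℝ) ^ (-(2*lam*((((n+1) * (m'-1) : ℕ)) : ℝ))) * ∏ j, g j (c j))
      = (fun a : T => (2:ℝ) ^ (-(2*lam * (∑ i, (a.1 i : ℝ))))) ∘ e := by
    funext c
    have he1 : ((e c : T) : Fin (n+1) → ℕ) = F c := rfl
    simp only [Function.comp_apply, he1, hgdef]
    rw [← Real.rpow_sum_of_pos (by norm_num : (0:ℝ) < 2),
      ← Real.rpow_add (by norm_num : (0:ℝ) < 2)]
    congr 1
    have hcast : (∑ i, ((F c i : ℕ) : ℝ))
        = ((∑ i, F c i : ℕ) : ℝ) := by push_cast; ring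
    have hfac : ∑ x : Fin (n+1), -(2 * lam * (((x:ℕ):ℝ)+1) * (((c x):ℝ)+1))
        = -(2 * lam * ∑ x : Fin (n+1), (((x:ℕ):ℝ)+1) * (((c x):ℝ)+1)) := by
      rw [Finset.sum_neg_distrib, Finset.mul_sum]
      congr 1
      exact Finset.sum_congr rfl fun x _ => by ring
    rw [hcast, hsum_eq c]
    push_cast [hm'cast]
    rw [hfac]
    ring
  rw [← hfun]
  -- identify the value
  have hprod : ∏ i ∈ Finset.Icc 1 (n+1), 1/((2:ℝ)^(2*lam*(i:ℝ)) - 1)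
      = ∏ j : Fin (n+1), 1/((2:ℝ)^(2*lam*((j:ℕ)+1:ℝ)) - 1) := by
    rw [Fin.prod_univ_eq_prod_range (fun j => 1/((2:ℝ)^(2*lam*((j:ℕ)+1:ℝ)) - 1)) (n+1)]
    refine Finset.prod_nbij' (fun a => a - 1) (fun a => a + 1) ?_ ?_ ?_ ?_ ?_
    · intro a ha; simp only [Finset.mem_Icc] at ha; simp only [Finset.mem_range]; omega
    · intro a ha; simp only [Finset.mem_range] at ha; simp only [Finset.mem_Icc]; omega
    · intro a ha; simp only [Finset.mem_Icc] at ha; show a - 1 + 1 = a; omega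
    · intro a ha; show a + 1 - 1 = a; omega
    · intro a ha
      simp only [Finset.mem_Icc] at ha
      have : ((a - 1 : ℕ) : ℝ) + 1 = (a : ℝ) := by
        have := Nat.cast_sub ha.1 (R := ℝ); push_cast [this]; ring
      rw [this]
  have hexp : (2:ℝ) ^ (-(2*lam*(((n+1:ℕ)):ℝ)*((m':ℝ)-1)))
      = (2:ℝ) ^ (-(2*lam*((((n+1) * (m'-1) : ℕ)) : ℝ))) := by
    congr 1
    push_cast [hm'cast]
    ring
  have hval : (2:ℝ) ^ (-(2*lam*(((n+1:ℕ)):ℝ)*((m':ℝ)-1))) *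
      ∏ i ∈ Finset.Icc 1 (n+1), 1/((2:ℝ)^(2*lam*(i:ℝ)) - 1)
      = (2:ℝ) ^ (-(2*lam*((((n+1) * (m'-1) : ℕ)) : ℝ))) *
        ∏ j : Fin (n+1), (1/((2:ℝ)^(2*lam*((j:ℕ)+1:ℝ)) - 1)) :=
    congrArg₂ (· * ·) hexp hprod
  rw [hval]
  exact hbig
end

section
/- Let α ≥ 2 be an integer, let λ > 1/(2α) be a real number, let m' be a positive integer, and let p ∈ 𝔽₂[x] be an irreducible polynomial with deg(p) = m'. Then Σ_{k∈E, p ∣ tr_{m'}(k)} 2^{−2λ μ_α(⌊k/2⌋)} = Σ_{l∈E} 2^{−2λ μ_α(l·2^{m'−1})}. -/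
open scoped BigOperators

attribute [local instance] Classical.propDecidable

lemma trunc_coeff (m' k i : ℕ) (hi : i < m') :
    (trunc m' k).coeff i = (if k.testBit i then 1 else 0) := by
  rw [trunc, Polynomial.finset_sum_coeff]
  rw [Finset.sum_eq_single i]
  · simp
  · intro b _ hb; simp [Polynomial.coeff_monomial, hb]
  · intro h; exact absurd (Finset.mem_range.2 hi) h

lemma trunc_degree (m' k : ℕ) : (trunc m' k).degree < (m' : WithBot ℕ) ∨ trunc m' k = 0 := by
  rcases eq_or_ne (trunc m' k) 0 with h | h
  · exact Or.inr h
  · left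
    refine lt_of_le_of_lt (Polynomial.degree_sum_le _ _) ?_
    rw [Finset.sup_lt_iff (by exact_mod_cast WithBot.bot_lt_coe m')]
    intro i hi
    exact lt_of_le_of_lt (Polynomial.degree_monomial_le _ _)
      (by exact_mod_cast Finset.mem_range.1 hi)

lemma trunc_eq_zero_iff (m' k : ℕ) : trunc m' k = 0 ↔ 2^m' ∣ k := by
  constructor
  · intro h
    rw [Nat.dvd_iff_mod_eq_zero]
    apply Nat.eq_of_testBit_eq
    intro i
    rw [Nat.testBit_mod_two_pow, Nat.zero_testBit]
    by_cases hi : i < m'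
    · have := trunc_coeff m' k i hi
      rw [h, Polynomial.coeff_zero] at this
      by_cases hb : k.testBit i
      · simp [hb] at this
      · simp [hb, hi]
    · simp [hi]
  · intro h
    have hk : k % 2^m' = 0 := Nat.mod_eq_zero_of_dvd h
    ext i
    rw [Polynomial.coeff_zero]
    by_cases hi : i < m'
    · rw [trunc_coeff m' k i hi]
      have hb : k.testBit i = false := by
        rw [show k.testBit i = (k % 2^m').testBit i by
              rw [Nat.testBit_mod_two_pow]; simp [hi],
            hk, Nat.zero_testBit]
      simp [hb]
    · rw [trunc, Polynomial.finset_sum_coeff]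
      apply Finset.sum_eq_zero
      intro b hb
      rw [Polynomial.coeff_monomial]
      have : b ≠ i := fun hbi => hi (hbi ▸ Finset.mem_range.1 hb)
      simp [this]

lemma sum_digits_mul_two_pow (m l : ℕ) (hl : l ≠ 0) :
    (Nat.digits 2 (l * 2^m)).sum = (Nat.digits 2 l).sum := by
  induction m with
  | zero => simp
  | succ m ih =>
    have h1 : l * 2^(m+1) = 2 * (l * 2^m) := by ring
    have hpos : 0 < l * 2^m :=
      Nat.mul_pos (Nat.pos_of_ne_zero hl) (Nat.pow_pos (by norm_num))
    rw [h1, Nat.digits_def' (by norm_num : 1 < 2) (by omega)]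
    simp [Nat.mul_div_cancel_left _ (by norm_num : 0 < 2), ih]

/-- Σ_{k∈E, p ∣ tr_{m'}(k)} 2^{−2λμ_α(⌊k/2⌋)} = Σ_{l∈E} 2^{−2λμ_α(l·2^{m'−1})}. -/
theorem stmt12 (α : ℕ) (hα : 2 ≤ α) (lam : ℝ) (hlam : 1/(2*(α:ℝ)) < lam)
    (m' : ℕ) (hm' : 0 < m') (p : Polynomial (ZMod 2)) (hp : Irreducible p)
    (hdeg : p.natDegree = m') :
    ∑' k : {k : ℕ // k ∈ Eset ∧ p ∣ trunc m' k},
        (2:ℝ) ^ (-(2*lam*(mu α (k.1/2) : ℝ)))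
      = ∑' l : ↥Eset, (2:ℝ) ^ (-(2*lam*(mu α ((l:ℕ) * 2^(m'-1)) : ℝ))) := by
  have hdvd : ∀ k, p ∣ trunc m' k ↔ 2 ^ m' ∣ k := by
    intro k
    rw [← trunc_eq_zero_iff]
    constructor
    · intro h
      by_contra hne
      have h1 : (trunc m' k).natDegree < m' := by
        rw [Polynomial.natDegree_lt_iff_degree_lt hne]
        rcases trunc_degree m' k with h2 | h2
        · exact h2
        · exact absurd h2 hne
      have h2 := Polynomial.natDegree_le_of_dvd h hne
      omega
    · intro h; rw [h]; exact dvd_zero p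
  have hEset : ∀ l : ℕ, l ≠ 0 → (l * 2^m' ∈ Eset ↔ l ∈ Eset) := by
    intro l hl
    unfold Eset
    simp only [Set.mem_setOf_eq]
    rw [sum_digits_mul_two_pow m' l hl]
    have hp2 : 0 < 2^m' := Nat.pow_pos two_pos
    have : 1 ≤ l * 2^m' ↔ 1 ≤ l := by
      constructor
      · intro h
        rcases Nat.eq_zero_or_pos l with h0 | h0
        · rw [h0, zero_mul] at h; omega
        · exact h0
      · intro h; exact Nat.mul_pos h hp2
    rw [this]
  let e : {k : ℕ // k ∈ Eset ∧ p ∣ trunc m' k} ≃ ↥Eset :=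
    { toFun := fun k => ⟨k.1 / 2^m', by
        obtain ⟨hkE, hkd⟩ := k.2
        have hd : 2^m' ∣ k.1 := (hdvd _).1 hkd
        have hne : k.1 / 2^m' ≠ 0 := by
          intro h0
          have := Nat.div_mul_cancel hd
          rw [h0, zero_mul] at this
          exact absurd this.symm (by have := hkE.1; omega)
        have := (hEset _ hne)
        rw [Nat.div_mul_cancel hd] at this
        exact this.1 hkE⟩
      invFun := fun l => ⟨l.1 * 2^m', by
        have hl : l.1 ≠ 0 := by have := l.2.1; omega
        refine ⟨(hEset _ hl).2 l.2, (hdvd _).2 (dvd_mul_left _ _)⟩⟩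
      left_inv := fun k => Subtype.ext (Nat.div_mul_cancel ((hdvd _).1 k.2.2))
      right_inv := fun l => Subtype.ext
        (Nat.mul_div_cancel _ (Nat.pow_pos two_pos)) }
  have heq := Equiv.tsum_eq e.symm
    (fun k : {k : ℕ // k ∈ Eset ∧ p ∣ trunc m' k} =>
      (2:ℝ) ^ (-(2*lam*(mu α (k.1/2) : ℝ))))
  rw [← heq]
  apply tsum_congr
  intro l
  have hdiv : (l : ℕ) * 2^m' / 2 = (l : ℕ) * 2^(m'-1) := by
    have : (l:ℕ) * 2^m' = ((l:ℕ) * 2^(m'-1)) * 2 := by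
      rw [mul_assoc, ← pow_succ]
      congr 2
      omega
    rw [this, Nat.mul_div_cancel _ two_pos]
  show (2:ℝ) ^ (-(2*lam*(mu α (((l:ℕ) * 2^m')/2) : ℝ)))
      = (2:ℝ) ^ (-(2*lam*(mu α ((l:ℕ) * 2^(m'-1)) : ℝ)))
  rw [hdiv]
end

section
/- Let α ≥ 2 and m' ≥ 1 be integers, let l be an integer with 0 ≤ l < 2^{m'}, and let x = l/2^{m'} with terminating binary expansion x = ξ_1 2^{−1} + ⋯ + ξ_{m'} 2^{−m'}, setting ξ_i = 0 for i > m'. Then ω_α(x) = Σ_{v=1}^{∞} (−1)^{v ξ_1} Σ_{0<a_v<⋯<a_1} 2^{−2 μ_α(2^{a_1−1}+⋯+2^{a_v−1})} (−1)^{ξ_{a_1+1}+⋯+ξ_{a_v+1}}, where the inner sums range over all strictly decreasing v-tuples of positive integers a_1 > ⋯ > a_v > 0, and both series converge absolutely. -/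
open scoped BigOperators

attribute [local instance] Classical.propDecidable

section Aux

/-! ### Auxiliary lemmas on binary digits and `bitIndices`. -/

theorem mem_bitIndices_iff (n : ℕ) : ∀ i, i ∈ n.bitIndices ↔ n.testBit i = true := by
  induction n using Nat.binaryRec with
  | zero => simp
  | bit b n ih =>
    intro i
    cases b <;> cases i <;>
      simp_all [Nat.bitIndices_bit_true, Nat.bitIndices_bit_false, Nat.testBit_succ,
        Nat.testBit_bit_zero, Nat.testBit_bit_succ, List.mem_map, Nat.succ_inj,
        Nat.mul_add_div, Nat.mul_div_cancel_left, Nat.mul_add_mod]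

theorem bitIndices_eq_filter (n : ℕ) :
    (List.range (n+1)).filter (fun i => n.testBit i) = n.bitIndices := by
  apply List.Perm.eq_of_pairwise (fun a b _ _ h1 h2 => absurd (h1.trans h2) (lt_irrefl a))
    (List.Pairwise.filter _ List.pairwise_lt_range) Nat.bitIndices_sorted.pairwise
  apply (List.perm_ext_iff_of_nodup (List.nodup_range.filter _)
    Nat.bitIndices_sorted.nodup).mpr
  intro i
  simp only [List.mem_filter, List.mem_range, mem_bitIndices_iff, decide_eq_true_eq]
  constructor
  · rintro ⟨-, h⟩; exact h
  · intro h
    refine ⟨?_, h⟩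
    have h2 : 2 ^ i ≤ n := Nat.two_pow_le_of_mem_bitIndices ((mem_bitIndices_iff n i).mpr h)
    exact Nat.lt_succ_of_le (le_trans (Nat.le_of_lt (Nat.lt_two_pow_self (n := i))) h2)

theorem digits_sum_eq_length (n : ℕ) : (Nat.digits 2 n).sum = n.bitIndices.length := by
  induction n using Nat.binaryRec with
  | zero => simp
  | bit b n ih =>
    rcases eq_or_ne (Nat.bit b n) 0 with h | h
    · rw [h]; rcases Nat.bit_eq_zero_iff.mp h with ⟨rfl, rfl⟩; simp
    · rw [Nat.digits_def' (by norm_num : 1 < 2) (Nat.pos_of_ne_zero h)]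
      cases b <;>
        simp_all [Nat.bit_false, Nat.bit_true, Nat.bitIndices_two_mul,
          Nat.bitIndices_two_mul_add_one, Nat.mul_add_div, Nat.mul_add_mod,
          Nat.mul_div_cancel_left] <;> omega

theorem range_two_pow_sum (n : ℕ) : ∑ i ∈ Finset.range n, 2^i = 2^n - 1 := by
  induction n with
  | zero => simp
  | succ n ih => rw [Finset.sum_range_succ, ih]; have := Nat.one_le_two_pow (n := n); omega

theorem mu_eq (α k : ℕ) : mu α k = ((k.bitIndices.reverse.take α).map (· + 1)).sum := by
  rw [mu, bitIndices_eq_filter]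

theorem lt_two_pow_mu (α m : ℕ) (hα : 1 ≤ α) : m < 2 ^ mu α m := by
  rcases Nat.eq_zero_or_pos m with rfl | hm
  · simp [mu]
  obtain ⟨h, t, hht⟩ : ∃ h t, m.bitIndices.reverse = h :: t := by
    have hne : m.bitIndices ≠ [] := by
      intro h
      have := Nat.twoPowSum_bitIndices m
      rw [h] at this; simp at this; omega
    cases hr : m.bitIndices.reverse with
    | nil => exact absurd (by simpa using congrArg List.reverse hr) hne
    | cons a b => exact ⟨a, b, rfl⟩
  have hub : ∀ i ∈ m.bitIndices, i ≤ h := by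
    intro i hi
    rw [← List.mem_reverse, hht] at hi
    have hs : (h :: t).Pairwise (· > ·) := by
      rw [← hht]
      exact List.pairwise_reverse.mpr (Nat.bitIndices_sorted.pairwise)
    rcases List.mem_cons.mp hi with rfl | hi
    · exact le_refl _
    · exact le_of_lt (List.rel_of_pairwise_cons hs hi)
  have hm2 : m < 2 ^ (h+1) := by
    conv_lhs => rw [← Finset.twoPowSum_toFinset_bitIndices m]
    have hsub : m.bitIndices.toFinset ⊆ Finset.range (h+1) := fun i hi =>
      Finset.mem_range.mpr (Nat.lt_succ_of_le (hub i (List.mem_toFinset.mp hi)))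
    calc ∑ i ∈ m.bitIndices.toFinset, 2^i ≤ ∑ i ∈ Finset.range (h+1), 2^i :=
          Finset.sum_le_sum_of_subset hsub
      _ = 2^(h+1) - 1 := range_two_pow_sum _
      _ < 2^(h+1) := by have := Nat.one_le_two_pow (n := h+1); omega
  have hmu : h + 1 ≤ mu α m := by
    rw [mu_eq, hht]
    obtain ⟨α', rfl⟩ := Nat.exists_eq_add_of_le hα
    rw [List.take_cons]
    · simp
    omega
  exact lt_of_lt_of_le hm2 (Nat.pow_le_pow_right (by norm_num) hmu)

/-! ### Summability of the basic series. -/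

theorem rpow_neg_two_mul (m : ℕ) : (2:ℝ)^(-(2:ℝ)*(m:ℝ)) = (1 / ((2:ℝ)^m))^2 := by
  rw [mul_comm, Real.rpow_mul (by norm_num), Real.rpow_natCast]
  rw [show (-2:ℝ) = ((-2:ℤ):ℝ) by norm_num, Real.rpow_intCast]
  rw [zpow_neg, zpow_two, div_pow, one_pow, ← mul_pow]
  norm_num [inv_pow]
  rw [← pow_mul, mul_comm, pow_mul]
  norm_num

theorem summable_basic (α : ℕ) (hα : 1 ≤ α) :
    Summable (fun k : ℕ => (2:ℝ)^(-(2:ℝ)*((mu α (k/2)):ℝ))) := by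
  have hb : ∀ k : ℕ, (2:ℝ)^(-(2:ℝ)*((mu α (k/2)):ℝ)) ≤ (2 / ((k:ℝ)+1))^2 := by
    intro k
    rw [rpow_neg_two_mul]
    apply pow_le_pow_left₀ (by positivity)
    rw [div_le_div_iff₀ (by positivity) (by positivity), one_mul]
    have h1 : k + 1 ≤ 2 * 2 ^ (mu α (k/2)) := by
      have := lt_two_pow_mu α (k/2) hα
      omega
    exact_mod_cast h1
  apply Summable.of_nonneg_of_le (fun k => by positivity) hb
  have : Summable (fun k : ℕ => (1:ℝ) / (k+1)^2) := by
    have := Real.summable_one_div_nat_pow.mpr (show 1 < 2 by norm_num)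
    exact_mod_cast (summable_nat_add_iff 1).mpr this
  refine (this.mul_left 4).congr (fun k => ?_)
  rw [div_pow]
  ring

/-! ### The equivalence between `Eset` and decreasing tuples. -/

theorem bitIndices_ne_nil {n : ℕ} (hn : 0 < n) : n.bitIndices ≠ [] := by
  intro h
  have := Nat.twoPowSum_bitIndices n
  rw [h] at this; simp at this; omega

theorem digits_sum_two_mul_add {n b : ℕ} (hb : b < 2) (h : 0 < 2*n+b) :
    (Nat.digits 2 (2*n+b)).sum = b + (Nat.digits 2 n).sum := by
  rw [Nat.digits_def' (by norm_num : 1 < 2) h]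
  have h1 : (2*n+b) % 2 = b := by omega
  have h2 : (2*n+b) / 2 = n := by omega
  rw [h1, h2, List.sum_cons]

/-- e1 : Eset ≃ positive naturals, k ↦ k/2. -/
noncomputable def e1 : ↥Eset ≃ {n : ℕ // 1 ≤ n} where
  toFun k := ⟨k.1 / 2, by
    obtain ⟨k, hk1, hk2⟩ := k
    simp only
    rcases Nat.lt_or_ge k 2 with h | h
    · have hk : k = 1 := by omega
      subst hk
      norm_num at hk2
    · omega⟩
  invFun n := ⟨2 * n.1 + (Nat.digits 2 n.1).sum % 2, by
    constructor
    · omega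
    · rw [digits_sum_two_mul_add (Nat.mod_lt _ (by norm_num)) (by omega), Nat.even_iff]
      omega⟩
  left_inv k := by
    obtain ⟨hk1, hk2⟩ := k.2
    ext
    simp only
    have hd : (Nat.digits 2 k.1).sum = k.1 % 2 + (Nat.digits 2 (k.1/2)).sum := by
      conv_lhs => rw [show k.1 = 2 * (k.1/2) + k.1 % 2 by omega]
      rw [digits_sum_two_mul_add (Nat.mod_lt _ (by norm_num)) (by omega)]
    rw [Nat.even_iff] at hk2
    omega
  right_inv n := by
    ext
    simp only
    omega

/-- e2 : positive naturals ≃ nonempty finsets, via bit indices. -/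
noncomputable def e2 : {n : ℕ // 1 ≤ n} ≃ {s : Finset ℕ // s.Nonempty} where
  toFun n := ⟨n.1.bitIndices.toFinset, by
    rcases List.exists_mem_of_ne_nil _ (bitIndices_ne_nil n.2) with ⟨i, hi⟩
    exact ⟨i, List.mem_toFinset.mpr hi⟩⟩
  invFun s := ⟨∑ i ∈ s.1, 2^i, by
    obtain ⟨i, hi⟩ := s.2
    calc 1 ≤ 2^i := Nat.one_le_two_pow
      _ ≤ _ := Finset.single_le_sum (fun j _ => Nat.zero_le _) hi⟩
  left_inv n := by ext; exact Finset.twoPowSum_toFinset_bitIndices n.1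
  right_inv s := by ext : 1; exact Finset.toFinset_bitIndices_twoPowSum s.1

/-- e3 : nonempty finsets ≃ sigma of finsets of fixed positive card. -/
def e3 : {s : Finset ℕ // s.Nonempty} ≃
    Σ v : {v : ℕ // 1 ≤ v}, {s : Finset ℕ // s.card = v.1} where
  toFun s := ⟨⟨s.1.card, Finset.card_pos.mpr s.2⟩, ⟨s.1, rfl⟩⟩
  invFun x := ⟨x.2.1, Finset.card_pos.mp (by rw [x.2.2]; exact x.1.2)⟩
  left_inv s := rfl
  right_inv := by
    rintro ⟨⟨v, hv⟩, s, hs⟩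
    dsimp only at hs
    subst hs
    rfl

theorem sub_one_strictMono_rev {v : ℕ} (a : Fin v → ℕ) (ha : StrictAnti a)
    (hpos : ∀ i, 0 < a i) : StrictMono (fun i : Fin v => a i.rev - 1) := by
  intro i j hij
  show a i.rev - 1 < a j.rev - 1
  have h1 : j.rev < i.rev := Fin.rev_lt_rev.mpr hij
  have h2 : a i.rev < a j.rev := ha h1
  have := hpos i.rev
  omega

theorem tuple_sub_inj {v : ℕ} (a : decTuples v) :
    Function.Injective (fun i : Fin v => a.1 i - 1) := by
  intro i j hij
  simp only at hij
  have h1 := a.2.2 i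
  have h2 := a.2.2 j
  have : a.1 i = a.1 j := by omega
  exact a.2.1.injective this

theorem tuple_image_card {v : ℕ} (a : decTuples v) :
    (Finset.image (fun i => a.1 i - 1) Finset.univ).card = v := by
  rw [Finset.card_image_of_injective _ (tuple_sub_inj a), Finset.card_univ, Fintype.card_fin]

set_option maxHeartbeats 1000000 in
/-- e4 : finsets of card v ≃ strictly decreasing tuples. -/
noncomputable def e4 (v : ℕ) : {s : Finset ℕ // s.card = v} ≃ decTuples v where
  toFun s := ⟨fun i => s.1.orderEmbOfFin s.2 i.rev + 1, by
    refine ⟨fun i j hij => ?_, fun i => Nat.succ_pos _⟩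
    show s.1.orderEmbOfFin s.2 j.rev + 1 < s.1.orderEmbOfFin s.2 i.rev + 1
    have h1 : j.rev < i.rev := Fin.rev_lt_rev.mpr hij
    have := (s.1.orderEmbOfFin s.2).strictMono h1
    omega⟩
  invFun a := ⟨Finset.image (fun i => a.1 i - 1) Finset.univ, tuple_image_card a⟩
  left_inv s := by
    apply Subtype.ext
    show Finset.image (fun i : Fin v => s.1.orderEmbOfFin s.2 i.rev + 1 - 1) Finset.univ = s.1
    ext x
    simp only [Finset.mem_image, Finset.mem_univ, true_and, Nat.add_sub_cancel]
    constructor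
    · rintro ⟨i, rfl⟩
      exact Finset.orderEmbOfFin_mem s.1 s.2 i.rev
    · intro hx
      have : x ∈ Set.range (s.1.orderEmbOfFin s.2) := by
        rw [Finset.range_orderEmbOfFin]
        exact hx
      obtain ⟨i, hi⟩ := this
      exact ⟨i.rev, by rw [Fin.rev_rev]; exact hi⟩
  right_inv a := by
    apply Subtype.ext
    funext i
    set sF := Finset.image (fun i => a.1 i - 1) Finset.univ with hsF
    have hmono := sub_one_strictMono_rev a.1 a.2.1 a.2.2
    have hfs : ∀ x, (fun j : Fin v => a.1 j.rev - 1) x ∈ sF := fun x =>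
      Finset.mem_image.mpr ⟨x.rev, Finset.mem_univ _, rfl⟩
    have heq := Finset.orderEmbOfFin_unique (tuple_image_card a) hfs hmono
    show sF.orderEmbOfFin (tuple_image_card a) i.rev + 1 = a.1 i
    rw [← heq]
    have := a.2.2 i
    simp only [Fin.rev_rev]
    omega

/-- The global equivalence between `Eset` and sigma of decreasing tuples. -/
noncomputable def eSigma : ↥Eset ≃ Σ v : {v : ℕ // 1 ≤ v}, decTuples v.1 :=
  e1.trans (e2.trans (e3.trans (Equiv.sigmaCongrRight (fun v => e4 v.1))))

theorem tuple_sum_image {v : ℕ} (a : decTuples v) :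
    ∑ i ∈ Finset.image (fun i => a.1 i - 1) Finset.univ, 2^i = ∑ i, 2^(a.1 i - 1) :=
  Finset.sum_image (fun x _ y _ h => tuple_sub_inj a h)

theorem eSigma_symm_val (v : {v : ℕ // 1 ≤ v}) (a : decTuples v.1) :
    ((eSigma.symm ⟨v, a⟩ : ↥Eset) : ℕ) = 2 * (∑ i, 2^(a.1 i - 1)) + v.1 % 2 := by
  have h0 : ((eSigma.symm ⟨v, a⟩ : ↥Eset) : ℕ)
      = 2 * (∑ i ∈ Finset.image (fun i => a.1 i - 1) Finset.univ, 2^i)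
        + (Nat.digits 2 (∑ i ∈ Finset.image (fun i => a.1 i - 1) Finset.univ, 2^i)).sum % 2 :=
    rfl
  have hlen : (Nat.digits 2 (∑ i ∈ Finset.image (fun i => a.1 i - 1) Finset.univ, 2^i)).sum
      = v.1 := by
    rw [digits_sum_eq_length, ← List.toFinset_card_of_nodup Nat.bitIndices_sorted.nodup,
      Finset.toFinset_bitIndices_twoPowSum, tuple_image_card a]
  rw [h0, hlen, tuple_sum_image]

/-! ### Walsh function computations. -/

theorem filter_range_eq (k : ℕ) :
    (Finset.range (k+1)).filter (fun i => k.testBit i) = k.bitIndices.toFinset := by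
  ext i
  simp only [Finset.mem_filter, Finset.mem_range, List.mem_toFinset, mem_bitIndices_iff]
  constructor
  · rintro ⟨-, h⟩; exact h
  · intro h
    refine ⟨?_, h⟩
    have h2 : 2 ^ i ≤ k := Nat.two_pow_le_of_mem_bitIndices ((mem_bitIndices_iff k i).mpr h)
    exact Nat.lt_succ_of_le (le_trans (Nat.le_of_lt (Nat.lt_two_pow_self (n := i))) h2)

theorem wal_eq_bitIndices (m' l k : ℕ) :
    wal m' l k = (-1:ℝ) ^ (∑ i ∈ k.bitIndices.toFinset, xi m' l (i+1)) := by
  rw [wal, ← filter_range_eq, Finset.sum_filter]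

theorem toFinset_map_succ (L : List ℕ) :
    (L.map (· + 1)).toFinset = L.toFinset.image (· + 1) := by
  ext i
  simp [List.mem_map]

theorem sum_bitIndices_two_mul_add (g : ℕ → ℕ) (n b : ℕ) (hb : b < 2) :
    ∑ i ∈ (2*n+b).bitIndices.toFinset, g i
      = b * g 0 + ∑ j ∈ n.bitIndices.toFinset, g (j+1) := by
  have hinj : Function.Injective (· + 1 : ℕ → ℕ) := fun x y h => by simpa using h
  interval_cases b
  · rw [Nat.add_zero, Nat.bitIndices_two_mul, toFinset_map_succ,
      Finset.sum_image (fun x _ y _ h => hinj h)]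
    simp
  · rw [Nat.bitIndices_two_mul_add_one]
    rw [List.toFinset_cons, toFinset_map_succ]
    rw [Finset.sum_insert (by simp [Finset.mem_image])]
    rw [Finset.sum_image (fun x _ y _ h => hinj h)]
    simp

theorem neg_one_pow_mod_two (v x : ℕ) : (-1:ℝ)^((v % 2) * x) = (-1:ℝ)^(v * x) := by
  rw [neg_one_pow_eq_pow_mod_two, neg_one_pow_eq_pow_mod_two (n := v * x)]
  congr 1
  rw [Nat.mul_mod, Nat.mul_mod v x]
  simp

/-- The key term identity: the summand of `omega` at `eSigma.symm ⟨v, a⟩` equals the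
tuple-side summand. -/
theorem term_key (α m' l : ℕ) (v : {v : ℕ // 1 ≤ v}) (a : decTuples v.1) :
    (2:ℝ)^(-(2:ℝ) * (mu α (((eSigma.symm ⟨v, a⟩ : ↥Eset) : ℕ)/2) : ℝ)) *
      wal m' l ((eSigma.symm ⟨v, a⟩ : ↥Eset) : ℕ)
    = (-1:ℝ)^(v.1 * xi m' l 1) *
        ((2:ℝ)^(-(2:ℝ) * (mu α (∑ i, 2^(a.1 i - 1)) : ℝ)) *
          (-1:ℝ)^(∑ i, xi m' l (a.1 i + 1))) := by
  rw [eSigma_symm_val]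
  have hdiv : (2 * (∑ i, 2^(a.1 i - 1)) + v.1 % 2) / 2 = ∑ i, 2^(a.1 i - 1) := by omega
  rw [hdiv, wal_eq_bitIndices,
    sum_bitIndices_two_mul_add (fun i => xi m' l (i+1)) _ _ (Nat.mod_lt _ (by norm_num))]
  have hs : (∑ i, 2^(a.1 i - 1) : ℕ).bitIndices.toFinset
      = Finset.image (fun i => a.1 i - 1) Finset.univ := by
    rw [← tuple_sum_image a]
    exact Finset.toFinset_bitIndices_twoPowSum _
  rw [hs, Finset.sum_image (fun x _ y _ h => tuple_sub_inj a h)]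
  have hxi : ∀ i : Fin v.1, xi m' l ((a.1 i - 1) + 1 + 1) = xi m' l (a.1 i + 1) := by
    intro i
    have := a.2.2 i
    congr 1
    omega
  rw [Finset.sum_congr rfl (fun i _ => hxi i), pow_add, neg_one_pow_mod_two]
  ring

end Aux

/-- expansion of ω_α(x) for a dyadic rational x = l/2^{m'}, with absolute
convergence of all series involved. -/
theorem stmt13 (α m' : ℕ) (hα : 2 ≤ α) (hm' : 1 ≤ m') (l : ℕ) (hl : l < 2^m') :
    (Summable (fun k : ↥Eset =>
        |(2:ℝ) ^ (-(2:ℝ) * (mu α ((k:ℕ)/2) : ℝ)) * wal m' l (k:ℕ)|)) ∧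
    (∀ v : ℕ, 1 ≤ v → Summable (fun a : decTuples v =>
        |(2:ℝ) ^ (-(2:ℝ) * (mu α (∑ i, 2^(a.1 i - 1)) : ℝ)) *
          (-1:ℝ)^(∑ i, xi m' l (a.1 i + 1))|)) ∧
    (Summable (fun v : {v : ℕ // 1 ≤ v} =>
        |((-1:ℝ)^(v.1 * xi m' l 1)) * ∑' a : decTuples v.1,
            (2:ℝ) ^ (-(2:ℝ) * (mu α (∑ i, 2^(a.1 i - 1)) : ℝ)) *
              (-1:ℝ)^(∑ i, xi m' l (a.1 i + 1))|)) ∧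
    omega α m' l = ∑' v : {v : ℕ // 1 ≤ v},
      ((-1:ℝ)^(v.1 * xi m' l 1)) * ∑' a : decTuples v.1,
          (2:ℝ) ^ (-(2:ℝ) * (mu α (∑ i, 2^(a.1 i - 1)) : ℝ)) *
            (-1:ℝ)^(∑ i, xi m' l (a.1 i + 1)) := by
  have hα1 : 1 ≤ α := by omega
  set F : ↥Eset → ℝ :=
    fun k => (2:ℝ)^(-(2:ℝ) * (mu α ((k:ℕ)/2) : ℝ)) * wal m' l (k:ℕ) with hFdef
  have habsF : ∀ k : ↥Eset, |F k| = (2:ℝ)^(-(2:ℝ) * (mu α ((k:ℕ)/2) : ℝ)) := by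
    intro k
    rw [hFdef]
    simp only
    rw [abs_mul, wal, abs_pow, abs_neg, abs_one, one_pow, mul_one,
      abs_of_pos (Real.rpow_pos_of_pos (by norm_num) _)]
  have h1 : Summable (fun k : ↥Eset => |F k|) := by
    have := (summable_basic α hα1).subtype Eset
    exact this.congr (fun k => (habsF k).symm)
  have hF : Summable F := h1.of_abs
  have hG : Summable (fun x : Σ v : {v : ℕ // 1 ≤ v}, decTuples v.1 => F (eSigma.symm x)) :=
    hF.comp_injective eSigma.symm.injective
  have hterm : ∀ (v : {v : ℕ // 1 ≤ v}) (a : decTuples v.1),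
      F (eSigma.symm ⟨v, a⟩) = (-1:ℝ)^(v.1 * xi m' l 1) *
        ((2:ℝ)^(-(2:ℝ) * (mu α (∑ i, 2^(a.1 i - 1)) : ℝ)) *
          (-1:ℝ)^(∑ i, xi m' l (a.1 i + 1))) := fun v a => term_key α m' l v a
  have hfiber : ∀ v : {v : ℕ // 1 ≤ v}, Summable (fun a : decTuples v.1 =>
      (2:ℝ)^(-(2:ℝ) * (mu α (∑ i, 2^(a.1 i - 1)) : ℝ)) *
        (-1:ℝ)^(∑ i, xi m' l (a.1 i + 1))) := by
    intro v
    have h2 := hG.sigma_factor v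
    have h3 := h2.congr (fun a => hterm v a)
    exact (summable_mul_left_iff (pow_ne_zero _ (by norm_num : (-1:ℝ) ≠ 0))).mp h3
  refine ⟨h1, ?_, ?_, ?_⟩
  · intro v hv
    exact (hfiber ⟨v, hv⟩).abs
  · have hGabs : Summable
        (fun x : Σ v : {v : ℕ // 1 ≤ v}, decTuples v.1 => |F (eSigma.symm x)|) := hG.abs
    have hsig := hGabs.sigma
    apply Summable.of_nonneg_of_le (fun v => abs_nonneg _) _ hsig
    intro v
    rw [abs_mul, abs_pow, abs_neg, abs_one, one_pow, one_mul]
    have heq : ∀ a : decTuples v.1,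
        |F (eSigma.symm ⟨v, a⟩)| =
          |(2:ℝ)^(-(2:ℝ) * (mu α (∑ i, 2^(a.1 i - 1)) : ℝ)) *
            (-1:ℝ)^(∑ i, xi m' l (a.1 i + 1))| := by
      intro a
      rw [hterm v a, abs_mul, abs_pow, abs_neg, abs_one, one_pow, one_mul]
    calc |∑' a : decTuples v.1,
          (2:ℝ)^(-(2:ℝ) * (mu α (∑ i, 2^(a.1 i - 1)) : ℝ)) *
            (-1:ℝ)^(∑ i, xi m' l (a.1 i + 1))|
        ≤ ∑' a : decTuples v.1,
          |(2:ℝ)^(-(2:ℝ) * (mu α (∑ i, 2^(a.1 i - 1)) : ℝ)) *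
            (-1:ℝ)^(∑ i, xi m' l (a.1 i + 1))| := by
          have hn := ((hfiber v).abs).congr
            (fun a : decTuples v.1 => (Real.norm_eq_abs _).symm)
          have := norm_tsum_le_tsum_norm (f := fun a : decTuples v.1 =>
            (2:ℝ)^(-(2:ℝ) * (mu α (∑ i, 2^(a.1 i - 1)) : ℝ)) *
              (-1:ℝ)^(∑ i, xi m' l (a.1 i + 1))) hn
          simpa only [Real.norm_eq_abs] using this
      _ = ∑' a : decTuples v.1, |F (eSigma.symm ⟨v, a⟩)| :=
          tsum_congr (fun a => (heq a).symm)
  · have homega : omega α m' l = ∑' k : ↥Eset, F k := rfl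
    rw [homega]
    calc (∑' k : ↥Eset, F k)
        = ∑' x : Σ v : {v : ℕ // 1 ≤ v}, decTuples v.1, F (eSigma.symm x) :=
          (Equiv.tsum_eq eSigma.symm F).symm
      _ = ∑' (v : {v : ℕ // 1 ≤ v}) (a : decTuples v.1), F (eSigma.symm ⟨v, a⟩) :=
          hG.tsum_sigma
      _ = _ := by
          apply tsum_congr
          intro v
          rw [tsum_congr (fun a => hterm v a), tsum_mul_left]
end

section
/- Let s, m, m' be positive integers with m ≤ m', let α ≥ 2 be an integer, let γ = (γ_u)_{u⊆{1,…,s}} be non-negative real weights, let p ∈ 𝔽₂[x] with deg(p) = m', and let q = (q_1,…,q_s) ∈ 𝔽₂[x]^s. Let x_{n,j} = v_{m'}(n q_j / p) for 0 ≤ n < 2^m and 1 ≤ j ≤ s, where the integer n is identified with the polynomial n(x) = n_0 + n_1 x + ⋯ ∈ 𝔽₂[x] via its binary digits n = n_0 + n_1·2 + ⋯. Then B_{α,γ}(q,p) = 2^{−m} Σ_{n=0}^{2^m−1} Σ_{∅≠u⊆{1,…,s}} γ_u D_α^{|u|} ∏_{j∈u} ω_α(x_{n,j}). -/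
open scoped BigOperators

attribute [local instance] Classical.propDecidable

open Polynomial

noncomputable section

variable (p : Polynomial (ZMod 2))

/-- t_l(f): constant coefficient of (f X^l) /ₘ p. -/
def tl (f : Polynomial (ZMod 2)) (l : ℕ) : ZMod 2 := ((f * Polynomial.X ^ l) /ₘ p).coeff 0

variable {p}

lemma divByMonic_add (hp : p.Monic) (f g : Polynomial (ZMod 2)) :
    (f + g) /ₘ p = f /ₘ p + g /ₘ p := by
  refine (Polynomial.div_modByMonic_unique (f /ₘ p + g /ₘ p) (f %ₘ p + g %ₘ p) hp
    ⟨?_, ?_⟩).1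
  · have h1 := Polynomial.modByMonic_add_div f p
    have h2 := Polynomial.modByMonic_add_div g p
    calc f %ₘ p + g %ₘ p + p * (f /ₘ p + g /ₘ p)
        = (f %ₘ p + p * (f /ₘ p)) + (g %ₘ p + p * (g /ₘ p)) := by ring
      _ = f + g := by rw [h1, h2]
  · exact (Polynomial.degree_add_le _ _).trans_lt
      (max_lt (Polynomial.degree_modByMonic_lt _ hp) (Polynomial.degree_modByMonic_lt _ hp))

lemma tl_add (hp : p.Monic) (f g : Polynomial (ZMod 2)) (l : ℕ) :
    tl p (f + g) l = tl p f l + tl p g l := by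
  unfold tl
  rw [add_mul, divByMonic_add hp, Polynomial.coeff_add]

lemma tl_zero (l : ℕ) : tl p 0 l = 0 := by
  unfold tl
  rw [zero_mul, Polynomial.zero_divByMonic, Polynomial.coeff_zero]

/-- bundled additive hom -/
def tlHom (hp : p.Monic) (l : ℕ) : Polynomial (ZMod 2) →+ ZMod 2 where
  toFun f := tl p f l
  map_zero' := tl_zero l
  map_add' f g := tl_add hp f g l

lemma tl_mul_monic (hp : p.Monic) (h : Polynomial (ZMod 2)) {l : ℕ} (hl : 1 ≤ l) :
    tl p (p * h) l = 0 := by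
  unfold tl
  rw [mul_assoc, Polynomial.mul_divByMonic_cancel_left _ hp, Polynomial.coeff_mul_X_pow']
  simp only [if_neg (by omega : ¬ l ≤ 0)]

lemma tl_modByMonic (hp : p.Monic) (f : Polynomial (ZMod 2)) {l : ℕ} (hl : 1 ≤ l) :
    tl p f l = tl p (f %ₘ p) l := by
  conv_lhs => rw [← Polynomial.modByMonic_add_div f p]
  rw [tl_add hp _ _ l, tl_mul_monic hp _ hl, add_zero]

lemma tl_one (hp : p.Monic) {r : Polynomial (ZMod 2)} (hr : r.degree < p.natDegree)
    (hd : 1 ≤ p.natDegree) :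
    tl p r 1 = r.coeff (p.natDegree - 1) := by
  set d := p.natDegree with hdd
  set c := r.coeff (d - 1) with hc
  have key : (r * X ^ 1) /ₘ p = Polynomial.C c := by
    refine (Polynomial.div_modByMonic_unique (Polynomial.C c) (r * X ^ 1 - Polynomial.C c * p) hp
      ⟨by ring, ?_⟩).1
    rw [Polynomial.degree_eq_natDegree hp.ne_zero, ← hdd]
    rw [Polynomial.degree_lt_iff_coeff_zero]
    intro i hi
    have hi' : d ≤ i := by exact_mod_cast hi
    obtain ⟨i', rfl⟩ : ∃ i', i = i' + 1 := ⟨i - 1, by omega⟩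
    rw [Polynomial.coeff_sub, pow_one, Polynomial.coeff_mul_X]
    rcases eq_or_lt_of_le hi' with h | h
    · have h3 : r.coeff i' = c := by rw [hc]; congr 1; omega
      rw [h3, Polynomial.coeff_C_mul, ← h]
      rw [hp.coeff_natDegree]; ring
    · have h1 : r.coeff i' = 0 := by
        apply Polynomial.coeff_eq_zero_of_degree_lt
        refine lt_of_lt_of_le hr ?_
        exact_mod_cast (by omega : d ≤ i')
      have h2 : p.coeff (i' + 1) = 0 := Polynomial.coeff_eq_zero_of_natDegree_lt (by omega)
      rw [h1, Polynomial.coeff_C_mul, h2]; ring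
  unfold tl
  rw [key, Polynomial.coeff_C]; simp

end
noncomputable section
open Polynomial
variable {p : Polynomial (ZMod 2)}

lemma tl_shift (r : Polynomial (ZMod 2)) (l : ℕ) : tl p (r * X) l = tl p r (l + 1) := by
  unfold tl
  congr 2
  ring

lemma degree_mul_X_lt {r : Polynomial (ZMod 2)} {d : ℕ} (hr : r.degree < (d : WithBot ℕ))
    (hd : 1 ≤ d) (hc : r.coeff (d - 1) = 0) : (r * X).degree < (d : WithBot ℕ) := by
  rw [Polynomial.degree_lt_iff_coeff_zero]
  intro i hi
  have hi' : d ≤ i := by exact_mod_cast hi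
  obtain ⟨i', rfl⟩ : ∃ i', i = i' + 1 := ⟨i - 1, by omega⟩
  rw [Polynomial.coeff_mul_X]
  rcases eq_or_lt_of_le hi' with h | h
  · have : i' = d - 1 := by omega
    rw [this, hc]
  · apply Polynomial.coeff_eq_zero_of_degree_lt
    exact lt_of_lt_of_le hr (by exact_mod_cast (by omega : d ≤ i'))

/-- Key induction: vanishing of t_1,…,t_M detects vanishing of the top M coefficients. -/
lemma tl_vanish_iff (hp : p.Monic) (M : ℕ) (hM : M ≤ p.natDegree)
    (r : Polynomial (ZMod 2)) (hr : r.degree < (p.natDegree : WithBot ℕ)) :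
    (∀ l ∈ Finset.Icc 1 M, tl p r l = 0) ↔
      (∀ i, p.natDegree - M ≤ i → i < p.natDegree → r.coeff i = 0) := by
  induction M generalizing r with
  | zero =>
    constructor
    · intro _ i h1 h2; omega
    · intro _ l hl; simp at hl
  | succ M ih =>
    have hd : 1 ≤ p.natDegree := by omega
    have h1 : tl p r 1 = r.coeff (p.natDegree - 1) := tl_one hp hr hd
    constructor
    · intro H i hi1 hi2
      have hc : r.coeff (p.natDegree - 1) = 0 := by
        rw [← h1]; exact H 1 (by simp only [Finset.mem_Icc]; omega)
      have hrx := degree_mul_X_lt hr hd hc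
      have Hx : ∀ l ∈ Finset.Icc 1 M, tl p (r * X) l = 0 := by
        intro l hl
        simp only [Finset.mem_Icc] at hl
        rw [tl_shift]
        exact H (l + 1) (by simp only [Finset.mem_Icc]; omega)
      have := (ih (by omega) (r * X) hrx).1 Hx
      rcases eq_or_lt_of_le (show i ≤ p.natDegree - 1 by omega) with h | h
      · rw [h]; exact hc
      · have := this (i + 1) (by omega) (by omega)
        rwa [Polynomial.coeff_mul_X] at this
    · intro H l hl
      simp only [Finset.mem_Icc] at hl
      have hc : r.coeff (p.natDegree - 1) = 0 := H _ (by omega) (by omega)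
      rcases Nat.eq_or_lt_of_le hl.1 with h | h
      · rw [← h, h1]; exact hc
      · obtain ⟨l', rfl⟩ : ∃ l', l = l' + 1 := ⟨l - 1, by omega⟩
        rw [← tl_shift]
        refine (ih (by omega) (r * X) (degree_mul_X_lt hr hd hc)).2 ?_ l' (by simp only [Finset.mem_Icc]; omega)
        intro i hi1 hi2
        obtain ⟨i', rfl⟩ : ∃ i', i = i' + 1 := ⟨i - 1, by omega⟩
        rw [Polynomial.coeff_mul_X]
        exact H i' (by omega) (by omega)

end
noncomputable section
open Polynomial
variable {p : Polynomial (ZMod 2)}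

lemma tl_vanish_iff_dual (hp : p.Monic) {m : ℕ} (hmm : m ≤ p.natDegree)
    (F : Polynomial (ZMod 2)) :
    (∀ b < m, tl p F (b + 1) = 0) ↔
      ∃ a : Polynomial (ZMod 2), a.degree < ((p.natDegree - m : ℕ) : WithBot ℕ) ∧ p ∣ F - a := by
  have hd0 : p ≠ 0 := hp.ne_zero
  have hdeg : p.degree = (p.natDegree : WithBot ℕ) := Polynomial.degree_eq_natDegree hd0
  set r := F %ₘ p with hrdef
  have hr : r.degree < (p.natDegree : WithBot ℕ) := by
    rw [← hdeg]; exact Polynomial.degree_modByMonic_lt F hp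
  have htl : ∀ l, 1 ≤ l → tl p F l = tl p r l := fun l hl => tl_modByMonic hp F hl
  constructor
  · intro H
    have H' : ∀ l ∈ Finset.Icc 1 m, tl p r l = 0 := by
      intro l hl
      simp only [Finset.mem_Icc] at hl
      obtain ⟨b, rfl⟩ : ∃ b, l = b + 1 := ⟨l - 1, by omega⟩
      rw [← htl _ (by omega)]
      exact H b (by omega)
    have hco := (tl_vanish_iff hp m hmm r hr).1 H'
    refine ⟨r, ?_, ⟨F /ₘ p, ?_⟩⟩
    · rw [Polynomial.degree_lt_iff_coeff_zero]
      intro i hi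
      have hi' : p.natDegree - m ≤ i := by exact_mod_cast hi
      by_cases h : i < p.natDegree
      · exact hco i hi' h
      · exact Polynomial.coeff_eq_zero_of_degree_lt
          (lt_of_lt_of_le hr (by exact_mod_cast (by omega : p.natDegree ≤ i)))
    · conv_lhs => rw [← Polynomial.modByMonic_add_div F p]
      ring
  · rintro ⟨a, ha, hdvd⟩
    have hada : a.degree < p.degree := by
      rw [hdeg]
      exact lt_of_lt_of_le ha (by exact_mod_cast (by omega : p.natDegree - m ≤ p.natDegree))
    have hra : r = a := by
      rw [hrdef, Polynomial.modByMonic_eq_of_dvd_sub hp hdvd,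
        (Polynomial.modByMonic_eq_self_iff hp).2 hada]
    intro b hb
    rw [htl _ (by omega), hra]
    refine (tl_vanish_iff hp m hmm a (hra ▸ hr)).2 ?_ (b + 1) (by simp only [Finset.mem_Icc]; omega)
    intro i hi1 _
    exact Polynomial.coeff_eq_zero_of_degree_lt
      (lt_of_lt_of_le ha (by exact_mod_cast hi1))

end
noncomputable section AuxBits
open Polynomial

/-- sign character on ZMod 2 -/
def chi (x : ZMod 2) : ℝ := if x = 0 then 1 else -1

lemma zmod2_cases (a : ZMod 2) : a = 0 ∨ a = 1 := by revert a; decide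

lemma chi_zero : chi 0 = 1 := by simp [chi]

lemma chi_add (a b : ZMod 2) : chi (a + b) = chi a * chi b := by
  have h2 : (1 : ZMod 2) + 1 = 0 := by decide
  have h10 : (1 : ZMod 2) ≠ 0 := by decide
  rcases zmod2_cases a with ha | ha <;> rcases zmod2_cases b with hb | hb <;>
    subst ha <;> subst hb <;> simp [chi, h2, h10]

lemma neg_one_pow_eq_chi (n : ℕ) : (-1 : ℝ) ^ n = chi ((n : ZMod 2)) := by
  induction n with
  | zero => simp [chi]
  | succ k ih =>
    rw [pow_succ, ih, Nat.cast_add, Nat.cast_one, chi_add]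
    norm_num [chi]

lemma chi_sum {β : Type*} (s : Finset β) (f : β → ZMod 2) :
    chi (∑ i ∈ s, f i) = ∏ i ∈ s, chi (f i) := by
  classical
  induction s using Finset.cons_induction with
  | empty => simp [chi]
  | cons a s ha ih => rw [Finset.sum_cons, Finset.prod_cons, chi_add, ih]

lemma sum_ite_pow_lt (M : ℕ) (c : ℕ → Bool) :
    (∑ i ∈ Finset.range M, if c i then 2 ^ i else 0) < 2 ^ M := by
  induction M with
  | zero => simp
  | succ M ih =>
    rw [Finset.sum_range_succ]
    have : (if c M then 2 ^ M else 0) ≤ 2 ^ M := by split <;> omega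
    have h2 : (2:ℕ) ^ (M + 1) = 2 ^ M + 2 ^ M := by ring
    omega

lemma testBit_sum_ite (M : ℕ) (c : ℕ → Bool) (b : ℕ) :
    (∑ i ∈ Finset.range M, if c i then 2 ^ i else 0).testBit b
      = (decide (b < M) && c b) := by
  induction M generalizing b with
  | zero => simp
  | succ M ih =>
    rw [Finset.sum_range_succ]
    have hlt := sum_ite_pow_lt M c
    have hre : (∑ i ∈ Finset.range M, if c i then 2 ^ i else 0) + (if c M then 2 ^ M else 0)
        = 2 ^ M * (if c M then 1 else 0) + (∑ i ∈ Finset.range M, if c i then 2 ^ i else 0) := by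
      split <;> ring
    rw [hre, Nat.testBit_two_pow_mul_add _ hlt]
    by_cases hb : b < M
    · rw [if_pos hb, ih, decide_eq_true hb, Bool.true_and,
        decide_eq_true (by omega : b < M + 1), Bool.true_and]
    · rw [if_neg hb]
      by_cases hbM : b = M
      · subst hbM
        rw [Nat.sub_self, decide_eq_true (by omega : b < b + 1), Bool.true_and]
        rcases Bool.dichotomy (c b) with h | h <;> rw [h] <;> simp
      · have h1 : ¬ (b < M + 1) := by omega
        rw [decide_eq_false h1, Bool.false_and]
        rcases Bool.dichotomy (c M) with h | h <;> simp only [h, if_true, if_false]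
        · simp
        · rw [show (1:ℕ) = 2 ^ 0 by norm_num, Nat.testBit_two_pow_of_ne (by omega : (0:ℕ) ≠ b - M)]

end AuxBits
noncomputable section AuxWal
open Polynomial

variable {p : Polynomial (ZMod 2)} {m' : ℕ}

lemma vnum_testBit (hp : p.Monic) (hd : p.natDegree = m') (f : Polynomial (ZMod 2)) (b : ℕ) :
    (vnum m' f p).testBit b = (decide (b < m') && decide (tl p f (m' - b) = 1)) := by
  classical
  have h1 : vnum m' f p
      = ∑ i ∈ Finset.range m', if (fun i => decide (tl p f (m' - i) = 1)) i then 2 ^ i else 0 := by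
    unfold vnum
    rw [Finset.sum_bij' (fun l _ => m' - l) (fun i _ => m' - i)]
    · intro l hl
      simp only [Finset.mem_Icc] at hl
      simp only [Finset.mem_range]; omega
    · intro i hi
      simp only [Finset.mem_range] at hi
      simp only [Finset.mem_Icc]; omega
    · intro l hl
      simp only [Finset.mem_Icc] at hl; omega
    · intro i hi
      simp only [Finset.mem_range] at hi; omega
    · intro l hl
      simp only [Finset.mem_Icc] at hl
      have hml : m' - (m' - l) = l := by omega
      have hdiv : (f * Polynomial.X ^ l) / p = (f * Polynomial.X ^ l) /ₘ p :=
        (Polynomial.divByMonic_eq_div _ hp).symm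
      simp only [hml, hdiv, decide_eq_true_eq]
      rfl
  rw [h1, testBit_sum_ite]

lemma xi_vnum (hp : p.Monic) (hd : p.natDegree = m') (f : Polynomial (ZMod 2)) {i : ℕ}
    (hi : i < m') :
    ((xi m' (vnum m' f p) (i + 1) : ℕ) : ZMod 2) = tl p f (i + 1) := by
  unfold xi
  have hb : (vnum m' f p).testBit (m' - (i + 1))
      = (decide (m' - (i+1) < m') && decide (tl p f (m' - (m' - (i+1))) = 1)) :=
    vnum_testBit hp hd f _
  have hmm : m' - (m' - (i + 1)) = i + 1 := by omega
  have hlt : m' - (i + 1) < m' := by omega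
  rw [hmm, decide_eq_true hlt, Bool.true_and] at hb
  rcases zmod2_cases (tl p f (i + 1)) with h | h
  · have : ¬ (vnum m' f p).testBit (m' - (i+1)) = true := by
      rw [hb]; simp [h]
    rw [if_neg (by tauto), h]; simp
  · have : (vnum m' f p).testBit (m' - (i+1)) = true := by
      rw [hb]; simp [h]
    rw [if_pos ⟨by omega, by omega, this⟩, h]; simp

lemma xi_big {l i : ℕ} (hi : m' ≤ i) : xi m' l (i + 1) = 0 := by
  unfold xi
  rw [if_neg]; rintro ⟨-, h, -⟩; omega

/-- the exponent functional ε(f,k) ∈ F₂ -/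
def eps (p f : Polynomial (ZMod 2)) (m' k : ℕ) : ZMod 2 :=
  ∑ i ∈ Finset.range m', if k.testBit i then tl p f (i + 1) else 0

lemma wal_vnum (hp : p.Monic) (hd : p.natDegree = m') (f : Polynomial (ZMod 2)) (k : ℕ) :
    wal m' (vnum m' f p) k = chi (eps p f m' k) := by
  classical
  unfold wal
  rw [neg_one_pow_eq_chi]
  congr 1
  rw [Nat.cast_sum]
  set l := vnum m' f p with hl
  have step1 : ∑ i ∈ Finset.range (k + 1),
        (((if k.testBit i then xi m' l (i + 1) else 0 : ℕ)) : ZMod 2)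
      = ∑ i ∈ Finset.range (k + 1 + m'),
        (((if k.testBit i then xi m' l (i + 1) else 0 : ℕ)) : ZMod 2) := by
    apply Finset.sum_subset
    · apply Finset.range_subset_range.2; omega
    · intro i _ hi
      simp only [Finset.mem_range] at hi
      have : k.testBit i = false := Nat.testBit_lt_two_pow
        (lt_of_lt_of_le (Nat.lt_two_pow_self (n := k)) (Nat.pow_le_pow_right (by norm_num) (by omega)))
      simp [this]
  have step3 : eps p f m' k = ∑ i ∈ Finset.range (k + 1 + m'),
      (if i < m' then (if k.testBit i then tl p f (i + 1) else 0) else 0) := by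
    unfold eps
    have e1 : (∑ i ∈ Finset.range m', if k.testBit i then tl p f (i + 1) else 0)
        = ∑ i ∈ Finset.range m',
            (if i < m' then (if k.testBit i then tl p f (i + 1) else 0) else 0) :=
      Finset.sum_congr rfl (fun i hi => by rw [if_pos (Finset.mem_range.1 hi)])
    rw [e1]
    apply Finset.sum_subset (Finset.range_subset_range.2 (by omega : m' ≤ k + 1 + m'))
    intro i _ hi
    simp only [Finset.mem_range, not_lt] at hi
    rw [if_neg (by omega)]
  rw [step1, step3]
  apply Finset.sum_congr rfl
  intro i _
  by_cases him : i < m'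
  · rw [if_pos him]
    by_cases hb : k.testBit i
    · rw [if_pos hb, if_pos hb, xi_vnum hp hd f him]
    · rw [if_neg hb, if_neg hb, Nat.cast_zero]
  · rw [if_neg him]
    rw [xi_big (by omega)]
    split <;> simp

end AuxWal
noncomputable section AuxChar
open Polynomial

variable {p : Polynomial (ZMod 2)} {m' : ℕ}

lemma eps_add (hp : p.Monic) (f g : Polynomial (ZMod 2)) (k : ℕ) :
    eps p (f + g) m' k = eps p f m' k + eps p g m' k := by
  unfold eps
  rw [← Finset.sum_add_distrib]
  apply Finset.sum_congr rfl
  intro i _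
  rw [tl_add hp]
  split <;> simp

lemma eps_zero (k : ℕ) : eps p 0 m' k = 0 := by
  unfold eps
  apply Finset.sum_eq_zero
  intro i _
  rw [tl_zero]
  split <;> rfl

lemma eps_sum (hp : p.Monic) {β : Type*} (t : Finset β) (F : β → Polynomial (ZMod 2)) (k : ℕ) :
    eps p (∑ x ∈ t, F x) m' k = ∑ x ∈ t, eps p (F x) m' k := by
  classical
  induction t using Finset.cons_induction with
  | empty => simp [eps_zero]
  | cons a t ha ih => rw [Finset.sum_cons, Finset.sum_cons, eps_add hp, ih]

lemma tl_comm (g : Polynomial (ZMod 2)) (b i : ℕ) :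
    tl p (Polynomial.X ^ b * g) (i + 1) = tl p (Polynomial.X ^ i * g) (b + 1) := by
  unfold tl
  congr 2
  ring

lemma eps_X_pow_mul (hp : p.Monic) (g : Polynomial (ZMod 2)) (b k : ℕ) :
    eps p (Polynomial.X ^ b * g) m' k = tl p (trunc m' k * g) (b + 1) := by
  unfold eps trunc
  rw [Finset.sum_mul]
  have hms : tl p (∑ i ∈ Finset.range m',
        Polynomial.monomial i (if k.testBit i then 1 else 0) * g) (b + 1)
      = ∑ i ∈ Finset.range m',
          tl p (Polynomial.monomial i (if k.testBit i then 1 else 0) * g) (b + 1) :=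
    map_sum (tlHom hp (b + 1)) _ _
  rw [hms]
  apply Finset.sum_congr rfl
  intro i _
  show (if k.testBit i then tl p (Polynomial.X ^ b * g) (i + 1) else 0)
      = tl p (Polynomial.monomial i (if k.testBit i then 1 else 0) * g) (b + 1)
  by_cases hb : k.testBit i
  · rw [if_pos hb, if_pos hb, ← Polynomial.X_pow_eq_monomial, tl_comm]
  · rw [if_neg hb, if_neg hb, Polynomial.monomial_zero_right, zero_mul, tl_zero]

/-- The character-sum counting lemma. -/
lemma count_chi (M : ℕ) (c : ℕ → ZMod 2) :
    ∑ n ∈ Finset.range (2 ^ M),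
        chi (∑ b ∈ Finset.range M, if n.testBit b then c b else 0)
      = if (∀ b < M, c b = 0) then ((2 : ℝ) ^ M) else 0 := by
  classical
  induction M with
  | zero =>
    rw [if_pos (by omega)]
    simp [chi]
  | succ M ih =>
    rw [show (2 : ℕ) ^ (M + 1) = 2 ^ M + 2 ^ M by ring, Finset.sum_range_add]
    have hfst : ∀ n ∈ Finset.range (2 ^ M),
        chi (∑ b ∈ Finset.range (M + 1), if n.testBit b then c b else 0)
          = chi (∑ b ∈ Finset.range M, if n.testBit b then c b else 0) := by
      intro n hn
      simp only [Finset.mem_range] at hn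
      rw [Finset.sum_range_succ, if_neg (by rw [Nat.testBit_lt_two_pow hn]; simp), add_zero]
    have hsnd : ∀ i ∈ Finset.range (2 ^ M),
        chi (∑ b ∈ Finset.range (M + 1), if (2 ^ M + i).testBit b then c b else 0)
          = chi (∑ b ∈ Finset.range M, if i.testBit b then c b else 0) * chi (c M) := by
      intro i hi
      simp only [Finset.mem_range] at hi
      have hbit : ∀ b, (2 ^ M + i).testBit b
          = if b < M then i.testBit b else Nat.testBit 1 (b - M) := by
        intro b
        rw [show 2 ^ M + i = 2 ^ M * 1 + i by ring, Nat.testBit_two_pow_mul_add 1 hi b]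
      have hM : (2 ^ M + i).testBit M = true := by
        rw [hbit M, if_neg (lt_irrefl M), Nat.sub_self]; decide
      have hsum : (∑ b ∈ Finset.range M, if (2 ^ M + i).testBit b then c b else 0)
          = ∑ b ∈ Finset.range M, if i.testBit b then c b else 0 :=
        Finset.sum_congr rfl (fun b hb => by
          rw [hbit b, if_pos (Finset.mem_range.1 hb)])
      rw [Finset.sum_range_succ, hsum, hM, if_pos rfl, chi_add]
    rw [Finset.sum_congr rfl hfst, Finset.sum_congr rfl hsnd, ← Finset.sum_mul, ih]
    rcases zmod2_cases (c M) with h | h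
    · have hchi : chi (c M) = 1 := by rw [h, chi_zero]
      rw [hchi, mul_one]
      by_cases H : ∀ b < M, c b = 0
      · have H' : ∀ b < M + 1, c b = 0 := by
          intro b hb
          rcases Nat.lt_succ_iff_lt_or_eq.1 hb with h' | h'
          · exact H b h'
          · rw [h']; exact h
        rw [if_pos H, if_pos H', pow_succ]; ring
      · have H' : ¬ ∀ b < M + 1, c b = 0 := fun HH => H fun b hb => HH b (by omega)
        rw [if_neg H, if_neg H']; ring
    · have hchi : chi (c M) = -1 := by rw [h]; simp [chi]
      have H' : ¬ ∀ b < M + 1, c b = 0 := by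
        intro HH
        have := HH M (by omega)
        rw [h] at this; exact absurd this (by decide)
      rw [hchi, if_neg H']; ring

end AuxChar
noncomputable section AuxAvg
open Polynomial

lemma trunc_zero (m' : ℕ) : trunc m' 0 = 0 := by
  unfold trunc
  apply Finset.sum_eq_zero
  intro i _
  rw [Nat.zero_testBit]
  simp

lemma nPoly_eq {M n : ℕ} (hn : n < 2 ^ M) :
    nPoly n = ∑ b ∈ Finset.range M, if n.testBit b then Polynomial.X ^ b else 0 := by
  unfold nPoly trunc
  have conv1 : ∀ i : ℕ, Polynomial.monomial i ((if n.testBit i then (1:ZMod 2) else 0))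
      = if n.testBit i then Polynomial.X ^ i else 0 := by
    intro i
    by_cases hb : n.testBit i
    · rw [if_pos hb, if_pos hb, Polynomial.X_pow_eq_monomial]
    · rw [if_neg hb, if_neg hb, Polynomial.monomial_zero_right]
  simp_rw [conv1]
  rw [Finset.sum_subset (Finset.range_subset_range.2 (by omega : n + 1 ≤ n + 1 + M))
      (fun i _ hi => ?_), ← Finset.sum_subset (Finset.range_subset_range.2 (by omega : M ≤ n + 1 + M))
      (fun i _ hi => ?_)]
  all_goals simp only [Finset.mem_range, not_lt] at hi
  all_goals rw [if_neg (by
      have hpow : n < 2 ^ i := by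
        rcases le_or_gt (n + 1) i with h | h
        · exact lt_of_lt_of_le (Nat.lt_two_pow_self (n := n)) (Nat.pow_le_pow_right (by norm_num) (by omega))
        · exact lt_of_lt_of_le hn (Nat.pow_le_pow_right (by norm_num) (by omega))
      rw [Nat.testBit_lt_two_pow hpow]
      simp)]

lemma char_avg {p : Polynomial (ZMod 2)} {m m' : ℕ} (hp : p.Monic) (hd : p.natDegree = m')
    (hmm : m ≤ m') (q : ℕ → Polynomial (ZMod 2)) (s : ℕ) (u : Finset ℕ)
    (hu : u ⊆ Finset.range s) (k : ↥u → ℕ) :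
    ∑ n ∈ Finset.range (2 ^ m), ∏ j : ↥u, wal m' (vnum m' (nPoly n * q (j : ℕ)) p) (k j)
      = if inDual m m' s q p (fun j => if h : j ∈ u then k ⟨j, h⟩ else 0)
        then ((2:ℝ) ^ m) else 0 := by
  classical
  set F : Polynomial (ZMod 2) := ∑ j ∈ u.attach, trunc m' (k j) * q (j : ℕ) with hF
  have stepA : ∀ n ∈ Finset.range (2 ^ m),
      (∏ j : ↥u, wal m' (vnum m' (nPoly n * q (j : ℕ)) p) (k j))
        = chi (∑ b ∈ Finset.range m, if n.testBit b then tl p F (b + 1) else 0) := by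
    intro n hn
    simp only [Finset.mem_range] at hn
    have h1 : ∀ j : ↥u, wal m' (vnum m' (nPoly n * q (j : ℕ)) p) (k j)
        = chi (eps p (nPoly n * q (j : ℕ)) m' (k j)) := fun j => wal_vnum hp hd _ _
    rw [Finset.prod_congr rfl (fun j _ => h1 j), ← chi_sum]
    congr 1
    have h2 : ∀ j : ↥u, eps p (nPoly n * q (j : ℕ)) m' (k j)
        = ∑ b ∈ Finset.range m,
            if n.testBit b then tl p (trunc m' (k j) * q (j : ℕ)) (b + 1) else 0 := by
      intro j
      have hdecomp : nPoly n * q (j : ℕ)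
          = ∑ b ∈ Finset.range m, (if n.testBit b then Polynomial.X ^ b * q (j : ℕ) else 0) := by
        rw [nPoly_eq hn, Finset.sum_mul]
        apply Finset.sum_congr rfl
        intro b _
        split <;> simp
      rw [hdecomp, eps_sum hp]
      apply Finset.sum_congr rfl
      intro b _
      by_cases hb : n.testBit b
      · rw [if_pos hb, if_pos hb, eps_X_pow_mul hp]
      · rw [if_neg hb, if_neg hb, eps_zero]
    rw [Finset.sum_congr rfl (fun j _ => h2 j), Finset.sum_comm]
    apply Finset.sum_congr rfl
    intro b _
    by_cases hb : n.testBit b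
    · simp only [if_pos hb]
      have hmap : tl p F (b + 1) = ∑ j ∈ u.attach, tl p (trunc m' (k j) * q (j : ℕ)) (b + 1) := by
        rw [hF]; exact map_sum (tlHom hp (b + 1)) _ _
      rw [hmap, Finset.univ_eq_attach]
    · simp only [if_neg hb]
      exact (Finset.sum_eq_zero fun j _ => rfl)
  rw [Finset.sum_congr rfl stepA, count_chi m (fun b => tl p F (b + 1))]
  have hsum : (∑ j ∈ Finset.range s,
      trunc m' ((fun j => if h : j ∈ u then k ⟨j, h⟩ else 0) j) * q j) = F := by
    rw [← Finset.sum_subset hu (fun j _ hj => by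
      simp only [dif_neg hj, trunc_zero, zero_mul])]
    rw [hF, ← Finset.sum_attach u
      (fun j => trunc m' (if h : j ∈ u then k ⟨j, h⟩ else 0) * q j)]
    apply Finset.sum_congr rfl
    intro x _
    congr 1
    rw [dif_pos x.2]
  have hiff : (∀ b < m, tl p F (b + 1) = 0) ↔ inDual m m' s q p
      (fun j => if h : j ∈ u then k ⟨j, h⟩ else 0) := by
    rw [tl_vanish_iff_dual hp (by omega : m ≤ p.natDegree) F]
    unfold inDual
    rw [hsum, hd]
  exact if_congr hiff rfl rfl

end AuxAvg
noncomputable section AuxSumm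

lemma testBit_log {n : ℕ} (hn : 1 ≤ n) : n.testBit (Nat.log 2 n) = true := by
  have h1 : 2 ^ Nat.log 2 n ≤ n := Nat.pow_log_le_self 2 (by omega)
  have h2 : n < 2 ^ (Nat.log 2 n + 1) := Nat.lt_pow_succ_log_self (by norm_num) n
  have hpos : 0 < 2 ^ Nat.log 2 n := Nat.pow_pos (by norm_num)
  have hdiv : n / 2 ^ Nat.log 2 n = 1 := by
    have hlo : 1 ≤ n / 2 ^ Nat.log 2 n := (Nat.one_le_div_iff hpos).2 h1
    have hhi : n / 2 ^ Nat.log 2 n < 2 := by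
      rw [Nat.div_lt_iff_lt_mul hpos]
      calc n < 2 ^ (Nat.log 2 n + 1) := h2
        _ = 2 * 2 ^ Nat.log 2 n := by ring
    omega
  rw [Nat.testBit_eq_decide_div_mod_eq, hdiv]
  decide

lemma mu_ge {α n : ℕ} (hα : 1 ≤ α) (hn : 1 ≤ n) : Nat.log 2 n + 1 ≤ mu α n := by
  unfold mu
  set g := Nat.log 2 n with hg
  have hgn : g ≤ n := Nat.log_le_self 2 n
  have hsplit : List.range (n + 1)
      = List.range (g + 1) ++ (List.range (n - g)).map ((g + 1) + ·) := by
    rw [show n + 1 = (g + 1) + (n - g) by omega, List.range_add]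
  rw [hsplit, List.filter_append]
  have h2 : ((List.range (n - g)).map ((g + 1) + ·)).filter (fun i => n.testBit i) = [] := by
    rw [List.filter_eq_nil_iff]
    intro a ha
    simp only [List.mem_map, List.mem_range] at ha
    obtain ⟨x, _, rfl⟩ := ha
    have : n.testBit ((g + 1) + x) = false := Nat.testBit_lt_two_pow
      (lt_of_lt_of_le (Nat.lt_pow_succ_log_self (by norm_num) n)
        (Nat.pow_le_pow_right (by norm_num) (by omega)))
    simp [this]
  rw [h2, List.append_nil, List.range_succ, List.filter_append]
  have h4 : List.filter (fun i => n.testBit i) [g] = [g] := by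
    simp [hg, testBit_log hn]
  rw [h4, List.reverse_append]
  simp only [List.reverse_cons, List.reverse_nil, List.nil_append, List.singleton_append]
  obtain ⟨α', rfl⟩ : ∃ α', α = α' + 1 := ⟨α - 1, by omega⟩
  rw [List.take_succ_cons, List.map_cons, List.sum_cons]
  omega

lemma Eset_three {k : ℕ} (hk : k ∈ Eset) : 3 ≤ k := by
  obtain ⟨h1, h2⟩ := hk
  by_contra h
  push_neg at h
  have d1 : Nat.digits 2 1 = [1] := by
    rw [Nat.digits_def' (by norm_num : 1 < 2) (by norm_num : 0 < 1)]
    norm_num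
  have d2 : Nat.digits 2 2 = [0, 1] := by
    rw [Nat.digits_def' (by norm_num : 1 < 2) (by norm_num : 0 < 2)]
    norm_num [d1]
  interval_cases k
  · rw [d1] at h2; norm_num at h2
  · rw [d2] at h2; norm_num at h2

lemma w_le {α k : ℕ} (hα : 1 ≤ α) (hk : 3 ≤ k) :
    (2:ℝ) ^ (-(2:ℝ) * (mu α (k / 2) : ℝ)) ≤ 4 / (k:ℝ) ^ 2 := by
  set n := k / 2 with hn
  have hn1 : 1 ≤ n := by omega
  set g := Nat.log 2 n with hg
  set P := 2 ^ (g + 1) with hP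
  have hnP : n < P := Nat.lt_pow_succ_log_self (by norm_num) n
  have hkP : k ≤ 2 * P := by omega
  have hmu : g + 1 ≤ mu α n := mu_ge hα hn1
  have step1 : (2:ℝ) ^ (-(2:ℝ) * (mu α n : ℝ)) ≤ (2:ℝ) ^ (-(2:ℝ) * ((g:ℝ) + 1)) := by
    apply Real.rpow_le_rpow_of_exponent_le (by norm_num)
    have : ((g:ℝ) + 1) ≤ (mu α n : ℝ) := by exact_mod_cast hmu
    nlinarith
  have step2 : (2:ℝ) ^ (-(2:ℝ) * ((g:ℝ) + 1)) = 1 / ((P:ℝ)) ^ 2 := by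
    have e1 : -(2:ℝ) * ((g:ℝ) + 1) = -(((g:ℝ) + 1) * 2) := by ring
    rw [e1, Real.rpow_neg (by norm_num), Real.rpow_mul (by norm_num)]
    have e2 : (2:ℝ) ^ ((g:ℝ) + 1) = (P:ℝ) := by
      rw [show ((g:ℝ) + 1) = ((g + 1 : ℕ) : ℝ) by push_cast; ring, Real.rpow_natCast]
      rw [hP]; push_cast; ring
    rw [e2, show ((2:ℝ) : ℝ) = (((2:ℕ)) : ℝ) by norm_num, Real.rpow_natCast]
    rw [one_div]
  have step3 : 1 / ((P:ℝ)) ^ 2 ≤ 4 / (k:ℝ) ^ 2 := by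
    have hk0 : (0:ℝ) < (k:ℝ) := by positivity
    have hP0 : (0:ℝ) < (P:ℝ) := by positivity
    rw [div_le_div_iff₀ (by positivity) (by positivity)]
    have : (k:ℝ) ≤ 2 * (P:ℝ) := by exact_mod_cast hkP
    nlinarith
  calc (2:ℝ) ^ (-(2:ℝ) * (mu α n : ℝ)) ≤ (2:ℝ) ^ (-(2:ℝ) * ((g:ℝ) + 1)) := step1
    _ = 1 / ((P:ℝ)) ^ 2 := step2
    _ ≤ 4 / (k:ℝ) ^ 2 := step3

lemma summable_w {α : ℕ} (hα : 1 ≤ α) :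
    Summable (fun k : ↥Eset => (2:ℝ) ^ (-(2:ℝ) * (mu α ((k:ℕ) / 2) : ℝ))) := by
  apply Summable.of_nonneg_of_le (fun k => (Real.rpow_pos_of_pos (by norm_num) _).le)
    (fun k => w_le hα (Eset_three k.2))
  have h1 : Summable (fun n : ℕ => (4:ℝ) * (1 / (n:ℝ) ^ 2)) :=
    (Real.summable_one_div_nat_pow.2 (by norm_num)).mul_left 4
  have h2 : Summable (fun k : ↥Eset => (4:ℝ) * (1 / ((k:ℕ):ℝ) ^ 2)) :=
    h1.comp_injective Subtype.coe_injective
  apply h2.congr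
  intro k
  ring

lemma abs_wal (m' l k : ℕ) : |wal m' l k| = 1 := by
  unfold wal
  rw [abs_pow, abs_neg, abs_one, one_pow]

end AuxSumm
noncomputable section AuxProd

lemma prod_tsum_fin {κ : Type*} (n : ℕ) (f : Fin n → κ → ℝ)
    (hf : ∀ i, Summable fun k => ‖f i k‖) :
    (Summable fun g : Fin n → κ => ‖∏ i, f i (g i)‖) ∧
      ((∏ i, ∑' k, f i k) = ∑' g : Fin n → κ, ∏ i, f i (g i)) := by
  induction n with
  | zero =>
    constructor
    · exact Summable.of_finite
    · rw [tsum_fintype]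
      simp
  | succ n ih =>
    obtain ⟨ihS, ihE⟩ := ih (fun i => f i.succ) (fun i => hf i.succ)
    set e : κ × (Fin n → κ) ≃ (Fin (n + 1) → κ) := Fin.consEquiv (fun _ => κ) with he
    have hprod : ∀ z : κ × (Fin n → κ),
        (∏ i, f i (e z i)) = f 0 z.1 * ∏ i : Fin n, f i.succ (z.2 i) := by
      intro z
      rw [Fin.prod_univ_succ]
      simp [he, Fin.consEquiv]
    have hS2 : Summable fun z : κ × (Fin n → κ) =>
        ‖f 0 z.1‖ * ‖∏ i : Fin n, f i.succ (z.2 i)‖ := by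
      apply summable_mul_of_summable_norm (f := fun k => ‖f 0 k‖)
        (g := fun g : Fin n → κ => ‖∏ i : Fin n, f i.succ (g i)‖)
      · simpa using hf 0
      · simpa using ihS
    have hS : Summable fun g : Fin (n + 1) → κ => ‖∏ i, f i (g i)‖ := by
      rw [← e.summable_iff]
      apply hS2.congr
      intro z
      simp only [Function.comp_apply, hprod z, norm_mul]
    refine ⟨hS, ?_⟩
    rw [Fin.prod_univ_succ]
    have e1 : (∏ i : Fin n, ∑' k, f i.succ k) = ∑' g : Fin n → κ, ∏ i : Fin n, f i.succ (g i) := ihE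
    rw [e1, tsum_mul_tsum_of_summable_norm (hf 0) ihS]
    rw [← e.tsum_eq (fun g : Fin (n + 1) → κ => ∏ i, f i (g i))]
    exact tsum_congr fun z => (hprod z).symm

lemma prod_tsum_fintype {ι : Type*} [Fintype ι] {κ : Type*} (f : ι → κ → ℝ)
    (hf : ∀ i, Summable fun k => ‖f i k‖) :
    (Summable fun g : ι → κ => ‖∏ i, f i (g i)‖) ∧
      ((∏ i, ∑' k, f i k) = ∑' g : ι → κ, ∏ i, f i (g i)) := by
  set n := Fintype.card ι with hn
  set e : ι ≃ Fin n := Fintype.equivFin ι with he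
  obtain ⟨S, E⟩ := prod_tsum_fin n (fun i k => f (e.symm i) k) (fun i => hf _)
  set B : (Fin n → κ) ≃ (ι → κ) := Equiv.arrowCongr e.symm (Equiv.refl κ) with hB
  have hBval : ∀ h : Fin n → κ, ∀ i : ι, B h i = h (e i) := by
    intro h i
    simp [hB, Equiv.arrowCongr]
  have key : ∀ h : Fin n → κ,
      (∏ i : ι, f i (B h i)) = ∏ i' : Fin n, f (e.symm i') (h i') := by
    intro h
    rw [← Equiv.prod_comp e (fun i' => f (e.symm i') (h i'))]
    apply Finset.prod_congr rfl
    intro i _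
    rw [hBval h i, e.symm_apply_apply]
  constructor
  · rw [← B.summable_iff]
    apply S.congr
    intro h
    simp only [Function.comp_apply]
    rw [key h]
  · have e2 : (∏ i : ι, ∑' k, f i k) = ∏ i' : Fin n, ∑' k, f (e.symm i') k :=
      (Equiv.prod_comp e.symm (fun i => ∑' k, f i k)).symm
    rw [e2, E, ← B.tsum_eq (fun g : ι → κ => ∏ i, f i (g i))]
    exact tsum_congr fun h => (key h).symm

end AuxProd
noncomputable section AuxFinal
open Polynomial

lemma per_u {s m m' α : ℕ} (hα : 2 ≤ α) (hmm : m ≤ m')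
    {p : Polynomial (ZMod 2)} (hp : p.Monic) (hd : p.natDegree = m')
    (q : ℕ → Polynomial (ZMod 2)) (u : Finset ℕ) (hu : u ⊆ Finset.range s) :
    dualSum m m' α s q p u
      = (1 / (2:ℝ) ^ m) * ∑ n ∈ Finset.range (2 ^ m),
          ∏ j ∈ u, omega α m' (vnum m' (nPoly n * q j) p) := by
  classical
  set w : ↥Eset → ℝ := fun k => (2:ℝ) ^ (-(2:ℝ) * (mu α ((k:ℕ) / 2) : ℝ)) with hw
  have hsumm : ∀ l : ℕ, Summable (fun k : ↥Eset => ‖w k * wal m' l (k:ℕ)‖) := by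
    intro l
    apply (summable_w (α := α) (by omega)).congr
    intro k
    rw [norm_mul, Real.norm_eq_abs, Real.norm_eq_abs, abs_wal, mul_one,
      abs_of_nonneg (Real.rpow_nonneg (by norm_num) _)]
  have step1 : ∀ n : ℕ, (∏ j ∈ u, omega α m' (vnum m' (nPoly n * q j) p))
      = ∑' g : (↥u → ↥Eset),
          ∏ j : ↥u, (w (g j) * wal m' (vnum m' (nPoly n * q (j:ℕ)) p) ((g j : ℕ))) := by
    intro n
    rw [← Finset.prod_coe_sort u (fun j => omega α m' (vnum m' (nPoly n * q j) p))]
    exact (prod_tsum_fintype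
      (f := fun (j : ↥u) (k : ↥Eset) => w k * wal m' (vnum m' (nPoly n * q (j:ℕ)) p) (k:ℕ))
      (fun j => hsumm _)).2
  have hsummp : ∀ n : ℕ, Summable (fun g : (↥u → ↥Eset) =>
      ∏ j : ↥u, (w (g j) * wal m' (vnum m' (nPoly n * q (j:ℕ)) p) ((g j : ℕ)))) := by
    intro n
    exact ((prod_tsum_fintype
      (f := fun (j : ↥u) (k : ↥Eset) => w k * wal m' (vnum m' (nPoly n * q (j:ℕ)) p) (k:ℕ))
      (fun j => hsumm _)).1).of_norm
  have step2 : (∑ n ∈ Finset.range (2 ^ m),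
        ∏ j ∈ u, omega α m' (vnum m' (nPoly n * q j) p))
      = ∑' g : (↥u → ↥Eset), ∑ n ∈ Finset.range (2 ^ m),
          ∏ j : ↥u, (w (g j) * wal m' (vnum m' (nPoly n * q (j:ℕ)) p) ((g j : ℕ))) := by
    rw [Finset.sum_congr rfl (fun n _ => step1 n)]
    exact (Summable.tsum_finsetSum (fun n _ => hsummp n)).symm
  have step3 : ∀ g : (↥u → ↥Eset),
      (∑ n ∈ Finset.range (2 ^ m),
        ∏ j : ↥u, (w (g j) * wal m' (vnum m' (nPoly n * q (j:ℕ)) p) ((g j : ℕ))))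
      = (∏ j : ↥u, w (g j)) *
          (if inDual m m' s q p (fun j => if h : j ∈ u then ((g ⟨j, h⟩ : ℕ)) else 0)
           then ((2:ℝ) ^ m) else 0) := by
    intro g
    have e1 : ∀ n : ℕ, (∏ j : ↥u, (w (g j) * wal m' (vnum m' (nPoly n * q (j:ℕ)) p) ((g j : ℕ))))
        = (∏ j : ↥u, w (g j)) *
            ∏ j : ↥u, wal m' (vnum m' (nPoly n * q (j:ℕ)) p) ((g j : ℕ)) := fun n =>
      Finset.prod_mul_distrib
    rw [Finset.sum_congr rfl (fun n _ => e1 n), ← Finset.mul_sum]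
    congr 1
    exact char_avg hp hd hmm q s u hu (fun j => (g j : ℕ))
  have step4 : dualSum m m' α s q p u
      = ∑' g : (↥u → ↥Eset),
          (if inDual m m' s q p (fun j => if h : j ∈ u then ((g ⟨j, h⟩ : ℕ)) else 0)
           then (∏ j : ↥u, w (g j)) else 0) := by
    unfold dualSum
    set F : (↥u → ℕ) → ℝ := fun k =>
      if (∀ j, (k j) ∈ Eset) ∧
          inDual m m' s q p (fun j => if h : j ∈ u then k ⟨j, h⟩ else 0)
      then ∏ j, (2:ℝ) ^ (-(2:ℝ) * (mu α (k j / 2) : ℝ)) else 0 with hF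
    set emb : (↥u → ↥Eset) → (↥u → ℕ) := fun g j => (g j : ℕ) with hemb
    have hinj : Function.Injective emb := by
      intro g g' h
      funext j
      have := congrFun h j
      exact Subtype.ext this
    have hsupp : Function.support F ⊆ Set.range emb := by
      intro k hk
      by_cases hc : ∀ j, (k j) ∈ Eset
      · exact ⟨fun j => ⟨k j, hc j⟩, rfl⟩
      · exfalso
        apply hk
        rw [hF]
        exact if_neg (fun hcc => hc hcc.1)
    rw [← hinj.tsum_eq hsupp]
    apply tsum_congr
    intro g
    simp only [hF]
    have hc : ∀ j : ↥u, (emb g j) ∈ Eset := fun j => (g j).2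
    by_cases hdu : inDual m m' s q p (fun j => if h : j ∈ u then ((g ⟨j, h⟩ : ℕ)) else 0)
    · rw [if_pos (⟨hc, hdu⟩ : _ ∧ _), if_pos hdu]
    · rw [if_neg (fun hcc : _ ∧ _ => hdu hcc.2), if_neg hdu]
  rw [step4, step2, ← tsum_mul_left]
  apply tsum_congr
  intro g
  rw [step3 g]
  by_cases hdu : inDual m m' s q p (fun j => if h : j ∈ u then ((g ⟨j, h⟩ : ℕ)) else 0)
  · rw [if_pos hdu, if_pos hdu]
    have h2 : ((2:ℝ) ^ m) ≠ 0 := by positivity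
    field_simp
  · rw [if_neg hdu, if_neg hdu]
    ring

end AuxFinal

/-- B_{α,γ}(q,p) = 2^{−m} Σ_{n<2^m} Σ_{∅≠u} γ_u D_α^{|u|} ∏_{j∈u} ω_α(x_{n,j}). -/
theorem stmt15 (s m m' α : ℕ) (hs : 0 < s) (hm : 0 < m) (hmm : m ≤ m') (hα : 2 ≤ α)
    (γ : Finset ℕ → ℝ) (hγ : ∀ u, 0 ≤ γ u)
    (p : Polynomial (ZMod 2)) (hdeg : p.natDegree = m')
    (q : ℕ → Polynomial (ZMod 2)) :
    Bcrit s m m' α γ q p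
      = (1/(2:ℝ)^m) * ∑ n ∈ Finset.range (2^m),
          ∑ u ∈ (Finset.range s).powerset.filter (· ≠ ∅),
            γ u * Dconst α ^ u.card *
              ∏ j ∈ u, omega α m' (vnum m' (nPoly n * q j) p) := by

  classical
  have hm' : 1 ≤ m' := le_trans hm hmm
  have hp0 : p ≠ 0 := by
    intro h
    rw [h, Polynomial.natDegree_zero] at hdeg
    omega
  have hp : p.Monic := by
    unfold Polynomial.Monic
    rcases zmod2_cases p.leadingCoeff with h | h
    · exact absurd (Polynomial.leadingCoeff_eq_zero.1 h) hp0
    · exact h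
  unfold Bcrit
  rw [Finset.sum_comm, Finset.mul_sum]
  apply Finset.sum_congr rfl
  intro u hu
  have hu' : u ⊆ Finset.range s := by
    have := (Finset.mem_filter.1 hu).1
    exact Finset.mem_powerset.1 this
  rw [per_u hα hmm hp hdeg q u hu', Finset.mul_sum, Finset.mul_sum, Finset.mul_sum]
  apply Finset.sum_congr rfl
  intro n _
  ring
end
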